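/- arXiv:2112.15361 — 8 statements merged into one kernel-verified Lean document; each statement's English description precedes it below -/
import Mathlib

section
/- Let I = (G, L) be an SMP instance, let M be a matching of G having exactly k blocking edges with respect to L, and let σ be a single swap. Then M has at least k − 1 blocking edges with respect to the preference lists σ(L). -/
/-- Preference lists: for each vertex on side `α` a list of neighbors in `β`,
and vice versa (most preferred first). -/
structure Prefs (α β : Type*) where
  fA : α → List β
  fB : β → List α

/-- `l'` is obtained from `l` by one adjacent transposition (swap). -/
def AdjSwap {γ : Type*} (l l' : List γ) : Prop :=
  ∃ (p s : List γ) (x y : γ), l = p ++ x :: y :: s ∧ l' = p ++ y :: x :: s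

/-- One swap applied to a set of preference lists: exactly one list changes,
by one adjacent transposition. -/
def SwapStep {α β : Type*} (L L' : Prefs α β) : Prop :=
  (∃ a, AdjSwap (L.fA a) (L'.fA a) ∧ (∀ a', a' ≠ a → L'.fA a' = L.fA a') ∧
      (∀ b, L'.fB b = L.fB b)) ∨
  (∃ b, AdjSwap (L.fB b) (L'.fB b) ∧ (∀ b', b' ≠ b → L'.fB b' = L.fB b') ∧
      (∀ a, L'.fA a = L.fA a))

/-- `SwapSeq k L L'` : `L'` is obtained from `L` by a sequence of `k` swaps. -/
def SwapSeq {α β : Type*} : ℕ → Prefs α β → Prefs α β → Prop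
  | 0, L, L' => L' = L
  | k + 1, L, L' => ∃ L'', SwapStep L L'' ∧ SwapSeq k L'' L'

/-- The preference lists are valid for the bipartite graph with edge set `E`:
each list is duplicate-free and consists exactly of the neighbors. -/
def ValidPrefs {α β : Type*} (E : Finset (α × β)) (L : Prefs α β) : Prop :=
  (∀ a, (L.fA a).Nodup) ∧ (∀ b, (L.fB b).Nodup) ∧
  (∀ a b, b ∈ L.fA a ↔ (a, b) ∈ E) ∧ (∀ a b, a ∈ L.fB b ↔ (a, b) ∈ E)

/-- In the list `l`, `x` is preferred to `y` (occurs strictly earlier). -/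
def PrefersIn {γ : Type*} [DecidableEq γ] (l : List γ) (x y : γ) : Prop :=
  x ∈ l ∧ l.idxOf x < l.idxOf y

/-- `M` is a matching of the bipartite graph with edge set `E`. -/
def IsMatching {α β : Type*} (E M : Finset (α × β)) : Prop :=
  M ⊆ E ∧ ∀ e ∈ M, ∀ e' ∈ M, (e.1 = e'.1 ∨ e.2 = e'.2) → e = e'

/-- `e` is a blocking edge of the matching `M` w.r.t. preference lists `L`. -/
def Blocking {α β : Type*} [DecidableEq α] [DecidableEq β]
    (E : Finset (α × β)) (L : Prefs α β) (M : Finset (α × β)) (e : α × β) : Prop :=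
  e ∈ E ∧ e ∉ M ∧
  ((∀ b, (e.1, b) ∉ M) ∨ ∃ b, (e.1, b) ∈ M ∧ PrefersIn (L.fA e.1) e.2 b) ∧
  ((∀ a, (a, e.2) ∉ M) ∨ ∃ a, (a, e.2) ∈ M ∧ PrefersIn (L.fB e.2) e.1 a)

/-- `M` is a stable matching w.r.t. preference lists `L`. -/
def StableM {α β : Type*} [DecidableEq α] [DecidableEq β]
    (E : Finset (α × β)) (L : Prefs α β) (M : Finset (α × β)) : Prop :=
  ∀ e, ¬ Blocking E L M e

lemma indexOf_split {γ : Type*} [DecidableEq γ] (p s : List γ) (x y z : γ)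
    (hxp : x ∉ p) (hyp : y ∉ p) (hxy : x ≠ y) :
    (p ++ x :: y :: s).idxOf z =
      if z ∈ p then p.idxOf z else if z = x then p.length
      else if z = y then p.length + 1 else p.length + 2 + s.idxOf z := by
  split_ifs with h1 h2 h3
  · exact List.idxOf_append_of_mem h1
  · subst h2
    rw [List.idxOf_append_of_notMem hxp, List.idxOf_cons_self]
    omega
  · subst h3
    rw [List.idxOf_append_of_notMem hyp, List.idxOf_cons_ne _ hxy,
      List.idxOf_cons_self]
  · rw [List.idxOf_append_of_notMem h1,
      List.idxOf_cons_ne _ (fun h => h2 h.symm),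
      List.idxOf_cons_ne _ (fun h => h3 h.symm)]
    omega

lemma prefersIn_swap_eq {γ : Type*} [DecidableEq γ] {p s : List γ} {x y u v : γ}
    (hn : (p ++ x :: y :: s).Nodup)
    (h1 : PrefersIn (p ++ x :: y :: s) u v)
    (h2 : ¬ PrefersIn (p ++ y :: x :: s) u v) : u = x ∧ v = y := by
  rw [List.nodup_append] at hn
  have hxy : x ≠ y := by
    have := hn.2.1; simp [List.nodup_cons] at this; tauto
  have hxp : x ∉ p := fun h => hn.2.2 x h x (by simp) rfl
  have hyp : y ∉ p := fun h => hn.2.2 y h y (by simp) rfl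
  obtain ⟨hu, hlt⟩ := h1
  have hperm : (p ++ x :: y :: s).Perm (p ++ y :: x :: s) :=
    List.Perm.append_left p (List.Perm.swap y x s)
  have hu' : u ∈ p ++ y :: x :: s := hperm.mem_iff.1 hu
  rw [PrefersIn, not_and] at h2
  have h2' := not_lt.1 (h2 hu')
  rw [indexOf_split p s x y u hxp hyp hxy, indexOf_split p s x y v hxp hyp hxy] at hlt
  rw [indexOf_split p s y x u hyp hxp hxy.symm,
    indexOf_split p s y x v hyp hxp hxy.symm] at h2'
  have hup : u ∈ p → p.idxOf u < p.length := fun h => List.idxOf_lt_length_iff.2 h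
  have hvp : v ∈ p → p.idxOf v < p.length := fun h => List.idxOf_lt_length_iff.2 h
  split_ifs at hlt h2' <;>
  first
    | exact ⟨‹u = x›, ‹v = y›⟩
    | exact absurd (‹u = x›.symm.trans ‹u = y›) hxy
    | exact absurd (‹v = x›.symm.trans ‹v = y›) hxy
    | (exfalso; (try have h5 := hup ‹u ∈ p›); (try have h6 := hvp ‹v ∈ p›); omega)

/-- If a matching `M` has exactly `k` blocking edges and one swap
`σ` is applied, then `M` has at least `k - 1` blocking edges afterwards. -/
theorem blocking_edges_after_one_swap {α β : Type*} [DecidableEq α] [DecidableEq β]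
    (E : Finset (α × β)) (L L' : Prefs α β) (M : Finset (α × β)) (k : ℕ)
    (hL : ValidPrefs E L) (hM : IsMatching E M)
    (hexact : {e : α × β | Blocking E L M e}.ncard = k)
    (hswap : SwapStep L L') :
    k - 1 ≤ {e : α × β | Blocking E L' M e}.ncard := by
  classical
  set S := {e : α × β | Blocking E L M e} with hS
  set S' := {e : α × β | Blocking E L' M e} with hS'
  have hSfin : S.Finite := Set.Finite.subset E.finite_toSet (fun e he => he.1)
  have hS'fin : S'.Finite := Set.Finite.subset E.finite_toSet (fun e he => he.1)
  have hsub : ∀ e1 ∈ S \ S', ∀ e2 ∈ S \ S', e1 = e2 := by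
    rcases hswap with ⟨a0, ⟨p, s, x, y, hl, hl'⟩, hA', hB'⟩ |
      ⟨b0, ⟨p, s, x, y, hl, hl'⟩, hB', hA'⟩
    · have key : ∀ e ∈ S \ S', e = (a0, x) := by
        rintro ⟨a, b⟩ ⟨hb1, hb2⟩
        simp only [hS, hS', Set.mem_setOf_eq] at hb1 hb2
        obtain ⟨hE, hMm, h3, h4⟩ := hb1
        by_cases hne : a = a0
        · subst hne
          have h4' : (∀ a', (a', b) ∉ M) ∨
              ∃ a', (a', b) ∈ M ∧ PrefersIn (L'.fB b) a a' := by
            rw [hB' b]; exact h4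
          rcases h3 with h3 | ⟨b', hb'M, hpref⟩
          · exact absurd ⟨hE, hMm, Or.inl h3, h4'⟩ hb2
          · have hnp : ¬ PrefersIn (L'.fA a) b b' :=
              fun hp => hb2 ⟨hE, hMm, Or.inr ⟨b', hb'M, hp⟩, h4'⟩
            rw [hl] at hpref
            rw [hl'] at hnp
            have hnd := hL.1 a
            rw [hl] at hnd
            obtain ⟨hh1, _⟩ := prefersIn_swap_eq hnd hpref hnp
            exact Prod.ext rfl hh1
        · exact absurd ⟨hE, hMm, by rw [hA' a hne]; exact h3,
            by rw [hB' b]; exact h4⟩ hb2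
      intro e1 h1 e2 h2; rw [key e1 h1, key e2 h2]
    · have key : ∀ e ∈ S \ S', e = (x, b0) := by
        rintro ⟨a, b⟩ ⟨hb1, hb2⟩
        simp only [hS, hS', Set.mem_setOf_eq] at hb1 hb2
        obtain ⟨hE, hMm, h3, h4⟩ := hb1
        by_cases hne : b = b0
        · subst hne
          have h3' : (∀ b', (a, b') ∉ M) ∨
              ∃ b', (a, b') ∈ M ∧ PrefersIn (L'.fA a) b b' := by
            rw [hA' a]; exact h3
          rcases h4 with h4 | ⟨a', ha'M, hpref⟩
          · exact absurd ⟨hE, hMm, h3', Or.inl h4⟩ hb2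
          · have hnp : ¬ PrefersIn (L'.fB b) a a' :=
              fun hp => hb2 ⟨hE, hMm, h3', Or.inr ⟨a', ha'M, hp⟩⟩
            rw [hl] at hpref
            rw [hl'] at hnp
            have hnd := hL.2.1 b
            rw [hl] at hnd
            obtain ⟨hh1, _⟩ := prefersIn_swap_eq hnd hpref hnp
            exact Prod.ext hh1 rfl
        · exact absurd ⟨hE, hMm, by rw [hA' a]; exact h3,
            by rw [hB' b hne]; exact h4⟩ hb2
      intro e1 h1 e2 h2; rw [key e1 h1, key e2 h2]
  have hdsub : S ⊆ S' ∪ (S \ S') := fun e he => by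
    by_cases h : e ∈ S'
    · exact Or.inl h
    · exact Or.inr ⟨he, h⟩
  have h2 : (S \ S').ncard ≤ 1 :=
    (Set.ncard_le_one (hSfin.subset Set.diff_subset)).2 hsub
  have h3 : S.ncard ≤ S'.ncard + (S \ S').ncard :=
    le_trans (Set.ncard_le_ncard hdsub (hS'fin.union (hSfin.subset Set.diff_subset)))
      (Set.ncard_union_le _ _)
  omega
end

section
/- Let I = (G, L) be an SMP instance and let L' be obtained from L by applying a sequence of k swaps. If M is a matching of G that is stable with respect to L', then M has at most k blocking edges with respect to L. -/
section Helpers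

open List

variable {γ : Type*} [DecidableEq γ]

lemma adjswap_perm {l l' : List γ} (h : AdjSwap l l') : l'.Perm l := by
  obtain ⟨p, s, x, y, rfl, rfl⟩ := h
  exact List.Perm.append_left p (List.Perm.swap x y s)

lemma prefers_swap_iff (p s : List γ) (x y : γ)
    (hnd : (p ++ x :: y :: s).Nodup) (u v : γ)
    (h1 : ¬(u = x ∧ v = y)) (h2 : ¬(u = y ∧ v = x)) :
    (PrefersIn (p ++ x :: y :: s) u v ↔ PrefersIn (p ++ y :: x :: s) u v) := by
  set l := p ++ x :: y :: s with hl
  set l' := p ++ y :: x :: s with hl'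
  have hnd' : l'.Nodup := (adjswap_perm ⟨p, s, x, y, rfl, rfl⟩).nodup_iff.mpr hnd
  obtain ⟨hp, hxys, hdisj⟩ := List.nodup_append'.mp hnd
  have hxp : x ∉ p := fun h => hdisj h (by simp)
  have hyp : y ∉ p := fun h => hdisj h (by simp)
  have hxy : x ≠ y := by
    intro h; subst h; exact (List.nodup_cons.mp hxys).1 (by simp)
  have hxl : x ∈ l := by simp [hl]
  have hyl : y ∈ l := by simp [hl]
  have hmem : ∀ z : γ, z ∈ l ↔ z ∈ l' := by
    intro z; simp only [hl, hl', List.mem_append, List.mem_cons]; tauto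
  have hix : l.idxOf x = p.length := by
    rw [hl, idxOf_append_of_notMem hxp, idxOf_cons_self]; omega
  have hiy : l.idxOf y = p.length + 1 := by
    rw [hl, idxOf_append_of_notMem hyp, idxOf_cons_ne _ hxy, idxOf_cons_self]
  have hiy' : l'.idxOf y = p.length := by
    rw [hl', idxOf_append_of_notMem hyp, idxOf_cons_self]; omega
  have hix' : l'.idxOf x = p.length + 1 := by
    rw [hl', idxOf_append_of_notMem hxp, idxOf_cons_ne _ (Ne.symm hxy),
      idxOf_cons_self]
  have hiz : ∀ z : γ, z ≠ x → z ≠ y → l'.idxOf z = l.idxOf z := by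
    intro z hzx hzy
    by_cases hzp : z ∈ p
    · rw [hl, hl', idxOf_append_of_mem hzp, idxOf_append_of_mem hzp]
    · rw [hl, hl', idxOf_append_of_notMem hzp, idxOf_append_of_notMem hzp,
        idxOf_cons_ne _ (Ne.symm hzx), idxOf_cons_ne _ (Ne.symm hzy),
        idxOf_cons_ne _ (Ne.symm hzy), idxOf_cons_ne _ (Ne.symm hzx)]
  have hne : ∀ z : γ, z ≠ x → z ≠ y → l.idxOf z ≠ p.length ∧ l.idxOf z ≠ p.length + 1 := by
    intro z hzx hzy
    by_cases hzl : z ∈ l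
    · constructor
      · intro h; exact hzx ((idxOf_inj hzl (y := x)).mp (by omega))
      · intro h; exact hzy ((idxOf_inj hzl (y := y)).mp (by omega))
    · have h1 : l.idxOf z = l.length := idxOf_eq_length_iff.mpr hzl
      have h2 : l.length = p.length + (s.length + 2) := by simp [hl] <;> omega
      omega
  by_cases huv : u = v
  · rw [huv]; simp [PrefersIn]
  by_cases hux : u = x
  · by_cases hvy : v = y
    · exact absurd ⟨hux, hvy⟩ h1
    have hvx : v ≠ x := fun h => huv (hux.trans h.symm)
    have hnev := hne v hvx hvy
    rw [PrefersIn, PrefersIn, hux, hix, hix', hiz v hvx hvy]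
    simp only [hxl, (hmem x).mp hxl, true_and]
    omega
  by_cases huy : u = y
  · by_cases hvx : v = x
    · exact absurd ⟨huy, hvx⟩ h2
    have hvy : v ≠ y := fun h => huv (huy.trans h.symm)
    have hnev := hne v hvx hvy
    rw [PrefersIn, PrefersIn, huy, hiy, hiy', hiz v hvx hvy]
    simp only [hyl, (hmem y).mp hyl, true_and]
    omega
  · have hneu := hne u hux huy
    by_cases hvx : v = x
    · rw [PrefersIn, PrefersIn, hvx, hix, hix', hiz u hux huy]
      constructor
      · rintro ⟨hm, hlt⟩; exact ⟨(hmem u).mp hm, by omega⟩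
      · rintro ⟨hm, hlt⟩; exact ⟨(hmem u).mpr hm, by omega⟩
    by_cases hvy : v = y
    · rw [PrefersIn, PrefersIn, hvy, hiy, hiy', hiz u hux huy]
      constructor
      · rintro ⟨hm, hlt⟩; exact ⟨(hmem u).mp hm, by omega⟩
      · rintro ⟨hm, hlt⟩; exact ⟨(hmem u).mpr hm, by omega⟩
    · rw [PrefersIn, PrefersIn, hiz u hux huy, hiz v hvx hvy]
      exact and_congr_left fun _ => hmem u

end Helpers
lemma valid_step {α β : Type*} [DecidableEq α] [DecidableEq β] {E : Finset (α × β)} {L L'' : Prefs α β}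
    (hL : ValidPrefs E L) (hstep : SwapStep L L'') : ValidPrefs E L'' := by
  obtain ⟨h1, h2, h3, h4⟩ := hL
  rcases hstep with ⟨a, hsw, hother, hB⟩ | ⟨b, hsw, hother, hA⟩
  · have hperm : (L''.fA a).Perm (L.fA a) := adjswap_perm hsw
    refine ⟨?_, ?_, ?_, ?_⟩
    · intro a'; by_cases h : a' = a
      · subst h; exact hperm.nodup_iff.mpr (h1 a')
      · rw [hother a' h]; exact h1 a'
    · intro b; rw [hB b]; exact h2 b
    · intro a' b; by_cases h : a' = a
      · subst h; rw [hperm.mem_iff]; exact h3 a' b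
      · rw [hother a' h]; exact h3 a' b
    · intro a' b; rw [hB b]; exact h4 a' b
  · have hperm : (L''.fB b).Perm (L.fB b) := adjswap_perm hsw
    refine ⟨?_, ?_, ?_, ?_⟩
    · intro a; rw [hA a]; exact h1 a
    · intro b'; by_cases h : b' = b
      · subst h; exact hperm.nodup_iff.mpr (h2 b')
      · rw [hother b' h]; exact h2 b'
    · intro a b'; rw [hA a]; exact h3 a b'
    · intro a b'; by_cases h : b' = b
      · subst h; rw [hperm.mem_iff]; exact h4 a b'
      · rw [hother b' h]; exact h4 a b'

lemma diff_subsingleton {α β : Type*} [DecidableEq α] [DecidableEq β]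
    {E : Finset (α × β)} {L L'' : Prefs α β} {M : Finset (α × β)}
    (hL : ValidPrefs E L) (hM : IsMatching E M) (hstep : SwapStep L L'') :
    ({e : α × β | Blocking E L M e} \ {e : α × β | Blocking E L'' M e}).Subsingleton := by
  rcases hstep with ⟨a, hsw, hother, hB⟩ | ⟨b, hsw, hother, hA⟩
  · obtain ⟨p, s, x, y, hpl, hpl'⟩ := hsw
    have hnd : (p ++ x :: y :: s).Nodup := by rw [← hpl]; exact hL.1 a
    have hxy : x ≠ y := by
      obtain ⟨-, hxys, -⟩ := List.nodup_append.mp hnd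
      intro h; subst h; exact (List.nodup_cons.mp hxys).1 (by simp)
    have hchar : ∀ e : α × β, Blocking E L M e → ¬ Blocking E L'' M e →
        e.1 = a ∧ ((e.2 = x ∧ (a, y) ∈ M) ∨ (e.2 = y ∧ (a, x) ∈ M)) := by
      rintro e ⟨heE, heM, hA, hBe⟩ hnot
      have hBe'' : ((∀ a', (a', e.2) ∉ M) ∨
          ∃ a', (a', e.2) ∈ M ∧ PrefersIn (L''.fB e.2) e.1 a') := by
        rw [hB e.2]; exact hBe
      rcases hA with hA1 | ⟨bb, hbbM, hpref⟩
      · exact absurd ⟨heE, heM, Or.inl hA1, hBe''⟩ hnot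
      by_cases hea : e.1 = a
      · subst hea
        refine ⟨rfl, ?_⟩
        have hnp : ¬ PrefersIn (L''.fA e.1) e.2 bb := by
          intro h
          exact hnot ⟨heE, heM, Or.inr ⟨bb, hbbM, h⟩, hBe''⟩
        by_contra hcon
        push_neg at hcon
        have h1 : ¬(e.2 = x ∧ bb = y) := by
          rintro ⟨h1, h2⟩
          exact (hcon.1 h1) (h2 ▸ hbbM)
        have h2 : ¬(e.2 = y ∧ bb = x) := by
          rintro ⟨h1, h2⟩
          exact (hcon.2 h1) (h2 ▸ hbbM)
        apply hnp
        rw [hpl']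
        rw [hpl] at hpref
        exact (prefers_swap_iff p s x y hnd e.2 bb h1 h2).mp hpref
      · apply absurd _ hnot
        refine ⟨heE, heM, Or.inr ⟨bb, hbbM, ?_⟩, hBe''⟩
        rw [hother e.1 hea]; exact hpref
    rintro e ⟨he1, he2⟩ e' ⟨he1', he2'⟩
    simp only [Set.mem_setOf_eq] at *
    obtain ⟨ha, hc⟩ := hchar e he1 he2
    obtain ⟨ha', hc'⟩ := hchar e' he1' he2'
    have h2 : e.2 = e'.2 := by
      rcases hc with ⟨hx, hMy⟩ | ⟨hy, hMx⟩ <;> rcases hc' with ⟨hx', hMy'⟩ | ⟨hy', hMx'⟩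
      · rw [hx, hx']
      · exact absurd (congrArg Prod.snd (hM.2 _ hMy _ hMx' (Or.inl rfl))) hxy.symm
      · exact absurd (congrArg Prod.snd (hM.2 _ hMx _ hMy' (Or.inl rfl))) hxy
      · rw [hy, hy']
    exact Prod.ext (ha.trans ha'.symm) h2
  · obtain ⟨p, s, x, y, hpl, hpl'⟩ := hsw
    have hnd : (p ++ x :: y :: s).Nodup := by rw [← hpl]; exact hL.2.1 b
    have hxy : x ≠ y := by
      obtain ⟨-, hxys, -⟩ := List.nodup_append.mp hnd
      intro h; subst h; exact (List.nodup_cons.mp hxys).1 (by simp)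
    have hchar : ∀ e : α × β, Blocking E L M e → ¬ Blocking E L'' M e →
        e.2 = b ∧ ((e.1 = x ∧ (y, b) ∈ M) ∨ (e.1 = y ∧ (x, b) ∈ M)) := by
      rintro e ⟨heE, heM, hAe, hBe⟩ hnot
      have hAe'' : ((∀ b', (e.1, b') ∉ M) ∨
          ∃ b', (e.1, b') ∈ M ∧ PrefersIn (L''.fA e.1) e.2 b') := by
        rw [hA e.1]; exact hAe
      rcases hBe with hB1 | ⟨aa, haaM, hpref⟩
      · exact absurd ⟨heE, heM, hAe'', Or.inl hB1⟩ hnot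
      by_cases heb : e.2 = b
      · subst heb
        refine ⟨rfl, ?_⟩
        have hnp : ¬ PrefersIn (L''.fB e.2) e.1 aa := by
          intro h
          exact hnot ⟨heE, heM, hAe'', Or.inr ⟨aa, haaM, h⟩⟩
        by_contra hcon
        push_neg at hcon
        have h1 : ¬(e.1 = x ∧ aa = y) := by
          rintro ⟨h1, h2⟩
          exact (hcon.1 h1) (h2 ▸ haaM)
        have h2 : ¬(e.1 = y ∧ aa = x) := by
          rintro ⟨h1, h2⟩
          exact (hcon.2 h1) (h2 ▸ haaM)
        apply hnp
        rw [hpl']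
        rw [hpl] at hpref
        exact (prefers_swap_iff p s x y hnd e.1 aa h1 h2).mp hpref
      · apply absurd _ hnot
        refine ⟨heE, heM, hAe'', Or.inr ⟨aa, haaM, ?_⟩⟩
        rw [hother e.2 heb]; exact hpref
    rintro e ⟨he1, he2⟩ e' ⟨he1', he2'⟩
    simp only [Set.mem_setOf_eq] at *
    obtain ⟨hb, hc⟩ := hchar e he1 he2
    obtain ⟨hb', hc'⟩ := hchar e' he1' he2'
    have h1 : e.1 = e'.1 := by
      rcases hc with ⟨hx, hMy⟩ | ⟨hy, hMx⟩ <;> rcases hc' with ⟨hx', hMy'⟩ | ⟨hy', hMx'⟩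
      · rw [hx, hx']
      · exact absurd (congrArg Prod.fst (hM.2 _ hMy _ hMx' (Or.inr rfl))) hxy.symm
      · exact absurd (congrArg Prod.fst (hM.2 _ hMx _ hMy' (Or.inr rfl))) hxy
      · rw [hy, hy']
    exact Prod.ext h1 (hb.trans hb'.symm)
lemma ncard_step {α β : Type*} [DecidableEq α] [DecidableEq β]
    {E : Finset (α × β)} {L L'' : Prefs α β} {M : Finset (α × β)}
    (hL : ValidPrefs E L) (hM : IsMatching E M) (hstep : SwapStep L L'') :
    {e : α × β | Blocking E L M e}.ncard ≤ {e : α × β | Blocking E L'' M e}.ncard + 1 := by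
  set S := {e : α × β | Blocking E L M e}
  set T := {e : α × β | Blocking E L'' M e}
  have hTfin : T.Finite :=
    E.finite_toSet.subset (fun e he => he.1)
  have hDss : (S \ T).Subsingleton := diff_subsingleton hL hM hstep
  have hDfin : (S \ T).Finite := hDss.finite
  have hsub : S ⊆ T ∪ (S \ T) := by
    intro e he
    by_cases h : e ∈ T
    · exact Or.inl h
    · exact Or.inr ⟨he, h⟩
  calc S.ncard ≤ (T ∪ (S \ T)).ncard := Set.ncard_le_ncard hsub (hTfin.union hDfin)
    _ ≤ T.ncard + (S \ T).ncard := Set.ncard_union_le _ _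
    _ ≤ T.ncard + 1 := by
        have : (S \ T).ncard ≤ 1 := (Set.ncard_le_one hDfin).mpr fun a ha b hb => hDss ha hb
        omega

/-- If `L'` is obtained from `L` by `k` swaps and the matching `M`
is stable w.r.t. `L'`, then `M` has at most `k` blocking edges w.r.t. `L`. -/
theorem blocking_edges_le_of_stable_after_swaps {α β : Type*} [DecidableEq α] [DecidableEq β]
    (E : Finset (α × β)) (L L' : Prefs α β) (M : Finset (α × β)) (k : ℕ)
    (hL : ValidPrefs E L) (hM : IsMatching E M)
    (hseq : SwapSeq k L L')
    (hstable : StableM E L' M) :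
    {e : α × β | Blocking E L M e}.ncard ≤ k := by
  induction k generalizing L with
  | zero =>
    have hLL : L' = L := hseq
    subst hLL
    have : {e : α × β | Blocking E L' M e} = ∅ := by
      ext e; simp only [Set.mem_setOf_eq, Set.mem_empty_iff_false, iff_false]
      exact hstable e
    rw [this, Set.ncard_empty]
  | succ k ih =>
    obtain ⟨L'', hstep, hs⟩ := hseq
    have hL'' := valid_step hL hstep
    calc {e : α × β | Blocking E L M e}.ncard
        ≤ {e : α × β | Blocking E L'' M e}.ncard + 1 := ncard_step hL hM hstep
      _ ≤ k + 1 := by have := ih L'' hL'' hs; omega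
end

section
/- Let I = (G, L) be an SMP instance such that some sequence of k swaps transforms L into preference lists L' for which G admits a perfect stable matching. Then for every stable matching M of (G, L), the number of vertices of G left unmatched by M is at most 2k. -/
section Lists
variable {γ : Type*} [DecidableEq γ]

instance (l : List γ) (x y : γ) : Decidable (PrefersIn l x y) := by
  unfold PrefersIn; infer_instance

lemma prefersIn_asymm {l : List γ} {x y : γ} (h1 : PrefersIn l x y) (h2 : PrefersIn l y x) :
    False := by
  have := h1.2; have := h2.2; omega

lemma prefersIn_total {l : List γ} (hnd : l.Nodup) {x y : γ} (hx : x ∈ l) (hy : y ∈ l)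
    (hxy : x ≠ y) : PrefersIn l x y ∨ PrefersIn l y x := by
  have h1 : l.idxOf x < l.length := List.idxOf_lt_length_iff.2 hx
  have h2 : l.idxOf y < l.length := List.idxOf_lt_length_iff.2 hy
  have hne : l.idxOf x ≠ l.idxOf y := fun h => hxy ((List.idxOf_inj hx).1 h)
  rcases lt_or_gt_of_ne hne with h | h
  · exact Or.inl ⟨hx, h⟩
  · exact Or.inr ⟨hy, h⟩

lemma adjSwap_perm {l l' : List γ} (h : AdjSwap l l') : l.Perm l' := by
  obtain ⟨p, s, x, y, rfl, rfl⟩ := h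
  exact (List.Perm.append_left p (List.Perm.swap y x s))

lemma adjSwap_key {l l' : List γ} (h : AdjSwap l l') (hnd : l.Nodup) :
    ∃ x y, ∀ u v, PrefersIn l u v → ¬ PrefersIn l' u v → u = x ∧ v = y := by
  obtain ⟨p, s, x, y, rfl, rfl⟩ := h
  refine ⟨x, y, ?_⟩
  rintro u v ⟨hu, hlt⟩ hnp
  obtain ⟨hp, hr, hdisj⟩ := List.nodup_append.1 hnd
  obtain ⟨hxm, hr2⟩ := List.nodup_cons.1 hr
  obtain ⟨hym, hs⟩ := List.nodup_cons.1 hr2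
  have hxy : x ≠ y := fun he => hxm (by simp [he])
  have hxs : x ∉ s := fun he => hxm (by simp [he])
  have hys : y ∉ s := hym
  have hxp : x ∉ p := fun he => hdisj _ he _ (by simp) rfl
  have hyp : y ∉ p := fun he => hdisj _ he _ (by simp) rfl
  -- index computations
  have key : ∀ z, z ∈ p ++ x :: y :: s →
      (z = x ∧ (p ++ x :: y :: s).idxOf z = p.length ∧
        (p ++ y :: x :: s).idxOf z = p.length + 1) ∨
      (z = y ∧ (p ++ x :: y :: s).idxOf z = p.length + 1 ∧
        (p ++ y :: x :: s).idxOf z = p.length) ∨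
      (z ≠ x ∧ z ≠ y ∧ (p ++ x :: y :: s).idxOf z = (p ++ y :: x :: s).idxOf z ∧
        ((p ++ x :: y :: s).idxOf z < p.length ∨
          p.length + 1 < (p ++ x :: y :: s).idxOf z)) := by
    intro z hz
    by_cases hzx : z = x
    · subst hzx
      refine Or.inl ⟨rfl, ?_, ?_⟩
      · rw [List.idxOf_append_of_notMem hxp, List.idxOf_cons_self]
        omega
      · rw [List.idxOf_append_of_notMem hxp, List.idxOf_cons_ne _ (Ne.symm hxy),
          List.idxOf_cons_self]
    by_cases hzy : z = y
    · subst hzy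
      refine Or.inr (Or.inl ⟨rfl, ?_, ?_⟩)
      · rw [List.idxOf_append_of_notMem hyp, List.idxOf_cons_ne _ hxy,
          List.idxOf_cons_self]
      · rw [List.idxOf_append_of_notMem hyp, List.idxOf_cons_self]
        omega
    refine Or.inr (Or.inr ⟨hzx, hzy, ?_, ?_⟩)
    · by_cases hzp : z ∈ p
      · rw [List.idxOf_append_of_mem hzp, List.idxOf_append_of_mem hzp]
      · rw [List.idxOf_append_of_notMem hzp, List.idxOf_append_of_notMem hzp,
          List.idxOf_cons_ne _ (Ne.symm hzx), List.idxOf_cons_ne _ (Ne.symm hzy),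
          List.idxOf_cons_ne _ (Ne.symm hzy), List.idxOf_cons_ne _ (Ne.symm hzx)]
    · by_cases hzp : z ∈ p
      · left
        rw [List.idxOf_append_of_mem hzp]
        exact List.idxOf_lt_length_iff.2 hzp
      · right
        rw [List.idxOf_append_of_notMem hzp,
          List.idxOf_cons_ne _ (Ne.symm hzx), List.idxOf_cons_ne _ (Ne.symm hzy)]
        omega
  have hu' : u ∈ p ++ y :: x :: s := by
    have := hu; simp only [List.mem_append, List.mem_cons] at this ⊢; tauto
  by_cases hv : v ∈ p ++ x :: y :: s
  · rcases key u hu with ⟨hux, hiu, hiu'⟩ | ⟨huy, hiu, hiu'⟩ | ⟨hux, huy, hiu, hiur⟩ <;>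
      rcases key v hv with ⟨hvx, hiv, hiv'⟩ | ⟨hvy, hiv, hiv'⟩ | ⟨hvx, hvy, hiv, hivr⟩
    · exact absurd (⟨hu', by omega⟩ : PrefersIn (p ++ y :: x :: s) u v) hnp
    · exact ⟨hux, hvy⟩
    all_goals exact absurd (⟨hu', by omega⟩ : PrefersIn (p ++ y :: x :: s) u v) hnp
  · exfalso
    have hv' : v ∉ p ++ y :: x :: s := by
      intro hc; apply hv
      simp only [List.mem_append, List.mem_cons] at hc ⊢; tauto
    have h1 : (p ++ y :: x :: s).idxOf v = (p ++ y :: x :: s).length :=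
      List.idxOf_eq_length_iff.2 hv'
    have h2 : (p ++ y :: x :: s).idxOf u < (p ++ y :: x :: s).length :=
      List.idxOf_lt_length_iff.2 hu'
    exact hnp ⟨hu', by omega⟩

end Lists
section Flips
variable {α β : Type*} [Fintype α] [Fintype β] [DecidableEq α] [DecidableEq β]

lemma swapSeq_perm {k : ℕ} {L L' : Prefs α β} (h : SwapSeq k L L') :
    (∀ a, (L.fA a).Perm (L'.fA a)) ∧ (∀ b, (L.fB b).Perm (L'.fB b)) := by
  induction k generalizing L with
  | zero => subst h; exact ⟨fun a => List.Perm.refl _, fun b => List.Perm.refl _⟩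
  | succ k ih =>
    obtain ⟨L'', hstep, hseq⟩ := h
    obtain ⟨ihA, ihB⟩ := ih hseq
    rcases hstep with ⟨a, hsw, hA, hB⟩ | ⟨b, hsw, hB, hA⟩
    · constructor
      · intro a'
        by_cases ha : a' = a
        · subst ha; exact (adjSwap_perm hsw).trans (ihA a')
        · exact (hA a' ha ▸ ihA a' : _)
      · intro b'; exact (hB b' ▸ ihB b' : _)
    · constructor
      · intro a'; exact (hA a' ▸ ihA a' : _)
      · intro b'
        by_cases hb : b' = b
        · subst hb; exact (adjSwap_perm hsw).trans (ihB b')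
        · exact (hB b' hb ▸ ihB b' : _)

/-- Pairs at an `α`-vertex ordered oppositely in `L` and `L'`. -/
def flipsA (L L' : Prefs α β) : Finset (α × β × β) :=
  Finset.univ.filter fun t => PrefersIn (L.fA t.1) t.2.1 t.2.2 ∧ PrefersIn (L'.fA t.1) t.2.2 t.2.1

def flipsB (L L' : Prefs α β) : Finset (β × α × α) :=
  Finset.univ.filter fun t => PrefersIn (L.fB t.1) t.2.1 t.2.2 ∧ PrefersIn (L'.fB t.1) t.2.2 t.2.1

lemma flipsA_self (L : Prefs α β) : flipsA L L = ∅ := by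
  apply Finset.filter_false_of_mem
  rintro t - ⟨h1, h2⟩
  exact prefersIn_asymm h1 h2

lemma flipsB_self (L : Prefs α β) : flipsB L L = ∅ := by
  apply Finset.filter_false_of_mem
  rintro t - ⟨h1, h2⟩
  exact prefersIn_asymm h1 h2

lemma flips_bound {k : ℕ} {L' : Prefs α β} :
    ∀ (L : Prefs α β), SwapSeq k L L' →
    (∀ a, (L.fA a).Nodup) → (∀ b, (L.fB b).Nodup) →
    (flipsA L L').card + (flipsB L L').card ≤ k := by
  induction k with
  | zero =>
    intro L h hndA hndB
    rw [h]
    simp [flipsA_self, flipsB_self]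
  | succ k ih =>
    intro L h hndA hndB
    obtain ⟨L'', hstep, hseq⟩ := h
    rcases hstep with ⟨a, hsw, hA, hB⟩ | ⟨b, hsw, hB, hA⟩
    · have hndA'' : ∀ a', (L''.fA a').Nodup := by
        intro a'
        by_cases ha : a' = a
        · subst ha; exact (adjSwap_perm hsw).nodup_iff.1 (hndA a')
        · rw [hA a' ha]; exact hndA a'
      have hndB'' : ∀ b', (L''.fB b').Nodup := fun b' => (hB b') ▸ hndB b'
      have hB' : flipsB L L' = flipsB L'' L' := by
        unfold flipsB
        apply Finset.filter_congr
        rintro t -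
        rw [hB t.1]
      obtain ⟨x, y, hkey⟩ := adjSwap_key hsw (hndA a)
      have hsub : flipsA L L' ⊆ insert (a, x, y) (flipsA L'' L') := by
        intro t ht
        simp only [flipsA, Finset.mem_filter, Finset.mem_univ, true_and] at ht
        obtain ⟨h1, h2⟩ := ht
        rw [Finset.mem_insert]
        by_cases hta : t.1 = a
        · by_cases hp : PrefersIn (L''.fA t.1) t.2.1 t.2.2
          · refine Or.inr ?_
            simp only [flipsA, Finset.mem_filter, Finset.mem_univ, true_and]
            exact ⟨hp, h2⟩
          · rw [hta] at h1 hp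
            obtain ⟨h3, h4⟩ := hkey t.2.1 t.2.2 h1 hp
            left; obtain ⟨t1, t2, t3⟩ := t; simp_all
        · refine Or.inr ?_
          simp only [flipsA, Finset.mem_filter, Finset.mem_univ, true_and]
          rw [hA t.1 hta]; exact ⟨h1, h2⟩
      have := ih L'' hseq hndA'' hndB''
      have hcard : (flipsA L L').card ≤ (flipsA L'' L').card + 1 := by
        calc (flipsA L L').card ≤ (insert (a, x, y) (flipsA L'' L')).card :=
              Finset.card_le_card hsub
          _ ≤ (flipsA L'' L').card + 1 := Finset.card_insert_le _ _
      have hBc : (flipsB L L').card = (flipsB L'' L').card := by rw [hB']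
      omega
    · have hndB'' : ∀ b', (L''.fB b').Nodup := by
        intro b'
        by_cases hb : b' = b
        · subst hb; exact (adjSwap_perm hsw).nodup_iff.1 (hndB b')
        · rw [hB b' hb]; exact hndB b'
      have hndA'' : ∀ a', (L''.fA a').Nodup := fun a' => (hA a') ▸ hndA a'
      have hA' : flipsA L L' = flipsA L'' L' := by
        unfold flipsA
        apply Finset.filter_congr
        rintro t -
        rw [hA t.1]
      obtain ⟨x, y, hkey⟩ := adjSwap_key hsw (hndB b)
      have hsub : flipsB L L' ⊆ insert (b, x, y) (flipsB L'' L') := by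
        intro t ht
        simp only [flipsB, Finset.mem_filter, Finset.mem_univ, true_and] at ht
        obtain ⟨h1, h2⟩ := ht
        rw [Finset.mem_insert]
        by_cases htb : t.1 = b
        · by_cases hp : PrefersIn (L''.fB t.1) t.2.1 t.2.2
          · refine Or.inr ?_
            simp only [flipsB, Finset.mem_filter, Finset.mem_univ, true_and]
            exact ⟨hp, h2⟩
          · rw [htb] at h1 hp
            obtain ⟨h3, h4⟩ := hkey t.2.1 t.2.2 h1 hp
            left; obtain ⟨t1, t2, t3⟩ := t; simp_all
        · refine Or.inr ?_
          simp only [flipsB, Finset.mem_filter, Finset.mem_univ, true_and]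
          rw [hB t.1 htb]; exact ⟨h1, h2⟩
      have := ih L'' hseq hndA'' hndB''
      have hcard : (flipsB L L').card ≤ (flipsB L'' L').card + 1 := by
        calc (flipsB L L').card ≤ (insert (b, x, y) (flipsB L'' L')).card :=
              Finset.card_le_card hsub
          _ ≤ (flipsB L'' L').card + 1 := Finset.card_insert_le _ _
      have hAc : (flipsA L L').card = (flipsA L'' L').card := by rw [hA']
      omega
    done

end Flips
section Main
variable {α β : Type*} [Fintype α] [Fintype β] [DecidableEq α] [DecidableEq β]

lemma main_ineq (E : Finset (α × β)) (L L'' : Prefs α β)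
    (hndA : ∀ a, (L.fA a).Nodup) (hndB : ∀ b, (L.fB b).Nodup)
    (hmemA : ∀ a b, b ∈ L.fA a ↔ (a, b) ∈ E) (hmemB : ∀ a b, a ∈ L.fB b ↔ (a, b) ∈ E)
    (hndA' : ∀ a, (L''.fA a).Nodup) (hndB' : ∀ b, (L''.fB b).Nodup)
    (hmemA' : ∀ a b, b ∈ L''.fA a ↔ (a, b) ∈ E) (hmemB' : ∀ a b, a ∈ L''.fB b ↔ (a, b) ∈ E)
    (M M' : Finset (α × β)) (hM : IsMatching E M) (hst : StableM E L M)
    (hM' : IsMatching E M') (hpA : ∀ a, ∃ b, (a, b) ∈ M') (hst' : StableM E L'' M') :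
    (Finset.univ.filter fun a : α => ∀ b, (a, b) ∉ M).card ≤
      (flipsA L L'').card + (flipsB L L'').card := by
  classical
  set st : α → α → Prop := fun u v => ∃ b, (u, b) ∈ M' ∧ (v, b) ∈ M with hstdef
  have st_pred_unique : ∀ {u v w : α}, st u w → st v w → u = v := by
    rintro u v w ⟨b, hub, hwb⟩ ⟨b', hvb, hwb'⟩
    have hbb : b = b' := congrArg Prod.snd (hM.2 _ hwb _ hwb' (Or.inl rfl))
    subst hbb
    exact congrArg Prod.fst (hM'.2 _ hub _ hvb (Or.inr rfl))
  have AUX : ∀ (n : ℕ) (S : Finset α) (a a0 : α), (∀ b, (a0, b) ∉ M) →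
      a ∉ S → S.card + n = Fintype.card α →
      (∀ x ∈ S, ∃ y ∈ insert a S, st x y) →
      a0 ∈ insert a S →
      Relation.ReflTransGen st a0 a →
      ((∀ b, (a, b) ∉ M) ∨ ∃ b b', (a, b) ∈ M ∧ (a, b') ∈ M' ∧ PrefersIn (L.fA a) b' b) →
      ∃ T ∈ (flipsA L L'').disjSum (flipsB L L''),
        ∃ x, Relation.ReflTransGen st a0 x ∧
          T.elim (fun t => (x, t.2.1) ∈ M') (fun t => t.2.2 = x) := by
    intro n
    induction n with
    | zero =>
      intro S a a0 _ haS hcard _ _ _ _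
      exfalso
      have hS : S = Finset.univ := Finset.eq_univ_of_card S (by omega)
      exact haS (hS ▸ Finset.mem_univ a)
    | succ n ih =>
      intro S a a0 ha0un haS hcard hsucc ha0mem hreach hInv
      obtain ⟨b, hab'⟩ := hpA a
      have habE : (a, b) ∈ E := hM'.1 hab'
      have habM : (a, b) ∉ M := by
        intro hmem
        rcases hInv with h | ⟨b0, b0', hb0, hb0', hpref⟩
        · exact h b hmem
        · have h1 : b0 = b := congrArg Prod.snd (hM.2 _ hb0 _ hmem (Or.inl rfl))
          subst h1
          have h2 : b0' = b0 := congrArg Prod.snd (hM'.2 _ hb0' _ hab' (Or.inl rfl))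
          subst h2
          exact absurd hpref.2 (Nat.lt_irrefl _)
      have hAside : (∀ b', (a, b') ∉ M) ∨ ∃ b0, (a, b0) ∈ M ∧ PrefersIn (L.fA a) b b0 := by
        rcases hInv with h | ⟨b0, b0', hb0, hb0', hpref⟩
        · exact Or.inl h
        · have h2 : b0' = b := congrArg Prod.snd (hM'.2 _ hb0' _ hab' (Or.inl rfl))
          subst h2
          exact Or.inr ⟨b0, hb0, hpref⟩
      have hBfail : ¬((∀ a', (a', b) ∉ M) ∨ ∃ a', (a', b) ∈ M ∧ PrefersIn (L.fB b) a a') :=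
        fun hB => hst (a, b) ⟨habE, habM, hAside, hB⟩
      push_neg at hBfail
      obtain ⟨⟨a1, ha1M⟩, hnopref⟩ := hBfail
      have hne : a ≠ a1 := fun h => habM (h ▸ ha1M)
      have hQ : PrefersIn (L.fB b) a1 a := by
        rcases prefersIn_total (hndB b) ((hmemB a b).2 habE)
          ((hmemB a1 b).2 (hM.1 ha1M)) hne with h | h
        · exact absurd h (hnopref a1 ha1M)
        · exact h
      have hstep : st a a1 := ⟨b, hab', ha1M⟩
      by_cases hrev : PrefersIn (L''.fB b) a a1
      · refine ⟨Sum.inr (b, a1, a), ?_, a, hreach, rfl⟩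
        apply Finset.inr_mem_disjSum.2
        simp only [flipsB, Finset.mem_filter, Finset.mem_univ, true_and]
        exact ⟨hQ, hrev⟩
      have hQ' : PrefersIn (L''.fB b) a1 a := by
        rcases prefersIn_total (hndB' b) ((hmemB' a b).2 habE)
          ((hmemB' a1 b).2 (hM.1 ha1M)) hne with h | h
        · exact absurd h hrev
        · exact h
      have ha1b' : (a1, b) ∉ M' :=
        fun h => hne (congrArg Prod.fst (hM'.2 _ hab' _ h (Or.inr rfl)))
      have hAfail : ¬((∀ y, (a1, y) ∉ M') ∨ ∃ y, (a1, y) ∈ M' ∧ PrefersIn (L''.fA a1) b y) :=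
        fun hA' => hst' (a1, b) ⟨hM.1 ha1M, ha1b', hA', Or.inr ⟨a, hab', hQ'⟩⟩
      push_neg at hAfail
      obtain ⟨b2, hb2⟩ := hpA a1
      have hnpb2 : ¬PrefersIn (L''.fA a1) b b2 := hAfail.2 b2 hb2
      have hbb2 : b ≠ b2 := fun h => ha1b' (by rw [h]; exact hb2)
      have hP' : PrefersIn (L''.fA a1) b2 b := by
        rcases prefersIn_total (hndA' a1) ((hmemA' a1 b).2 (hM.1 ha1M))
          ((hmemA' a1 b2).2 (hM'.1 hb2)) hbb2 with h | h
        · exact absurd h hnpb2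
        · exact h
      by_cases hrev2 : PrefersIn (L.fA a1) b b2
      · refine ⟨Sum.inl (a1, b, b2), ?_, a, hreach, hab'⟩
        apply Finset.inl_mem_disjSum.2
        simp only [flipsA, Finset.mem_filter, Finset.mem_univ, true_and]
        exact ⟨hrev2, hP'⟩
      have hP : PrefersIn (L.fA a1) b2 b := by
        rcases prefersIn_total (hndA a1) ((hmemA a1 b).2 (hM.1 ha1M))
          ((hmemA a1 b2).2 (hM'.1 hb2)) hbb2 with h | h
        · exact absurd h hrev2
        · exact h
      by_cases ha1mem : a1 ∈ insert a S
      · exfalso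
        have hex : ∀ x ∈ insert a S, ∃ y, y ∈ insert a S ∧ st x y := by
          intro x hx
          rcases Finset.mem_insert.1 hx with h | h
          · exact ⟨a1, ha1mem, h ▸ hstep⟩
          · obtain ⟨y, hy, hxy⟩ := hsucc x h
            exact ⟨y, hy, hxy⟩
        have hinj : ∀ (x x' : α) (hx : x ∈ insert a S) (hx' : x' ∈ insert a S),
            (hex x hx).choose = (hex x' hx').choose → x = x' := by
          intro x x' hx hx' heq
          have h1 : st x ((hex x hx).choose) := ((hex x hx).choose_spec).2
          have h2 : st x' ((hex x' hx').choose) := ((hex x' hx').choose_spec).2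
          rw [← heq] at h2
          exact st_pred_unique h1 h2
        have hsurj := Finset.surj_on_of_inj_on_of_card_le
          (fun x (hx : x ∈ insert a S) => (hex x hx).choose)
          (fun x hx => ((hex x hx).choose_spec).1)
          hinj
          le_rfl
        obtain ⟨x, hx, hxa0⟩ := hsurj a0 ha0mem
        have hst0 : st x a0 := by rw [hxa0]; exact ((hex x hx).choose_spec).2
        obtain ⟨bb, _, h2⟩ := hst0
        exact ha0un bb h2
      · have hcard' : (insert a S).card + n = Fintype.card α := by
          rw [Finset.card_insert_of_notMem haS]; omega
        refine ih (insert a S) a1 a0 ha0un ha1mem hcard' ?_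
          (Finset.mem_insert_of_mem ha0mem) (hreach.tail hstep)
          (Or.inr ⟨b, b2, ha1M, hb2, hP⟩)
        intro x hx
        rcases Finset.mem_insert.1 hx with h | h
        · exact ⟨a1, Finset.mem_insert_self _ _, h ▸ hstep⟩
        · obtain ⟨y, hy, hxy⟩ := hsucc x h
          exact ⟨y, Finset.mem_insert_of_mem hy, hxy⟩
  have hEX : ∀ a0 : α, (∀ b, (a0, b) ∉ M) →
      ∃ T ∈ (flipsA L L'').disjSum (flipsB L L''),
        ∃ x, Relation.ReflTransGen st a0 x ∧
          T.elim (fun t => (x, t.2.1) ∈ M') (fun t => t.2.2 = x) := by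
    intro a0 h0
    exact AUX (Fintype.card α) ∅ a0 a0 h0 (Finset.notMem_empty _) (by simp)
      (by simp) (by simp) Relation.ReflTransGen.refl (Or.inl h0)
  have reach_compare : ∀ (c u : α), Relation.ReflTransGen st u c →
      ∀ v, Relation.ReflTransGen st v c →
      Relation.ReflTransGen st u v ∨ Relation.ReflTransGen st v u := by
    intro c u hu
    induction hu using Relation.ReflTransGen.head_induction_on with
    | refl => intro v hv; exact Or.inr hv
    | head h' h ih =>
      intro v hv
      rcases ih v hv with hcase | hcase
      · exact Or.inl (hcase.head h')
      · rcases Relation.ReflTransGen.cases_tail hcase with heq | ⟨y, hvy, hy⟩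
        · subst heq
          exact Or.inl (Relation.ReflTransGen.single h')
        · have hyu := st_pred_unique hy h'
          exact Or.inr (hyu ▸ hvy)
  have reach_unmatched : ∀ u v : α, (∀ b, (v, b) ∉ M) →
      Relation.ReflTransGen st u v → u = v := by
    intro u v hv h
    rcases Relation.ReflTransGen.cases_tail h with heq | ⟨y, _, hy⟩
    · exact heq.symm
    · obtain ⟨bb, _, h2⟩ := hy
      exact absurd h2 (hv bb)
  rcases Finset.eq_empty_or_nonempty
      (Finset.univ.filter fun a : α => ∀ b, (a, b) ∉ M) with he | ⟨a00, ha00⟩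
  · rw [he]; simp
  · have ha00' : ∀ b, (a00, b) ∉ M := (Finset.mem_filter.1 ha00).2
    obtain ⟨T0, hT0, -⟩ := hEX a00 ha00'
    set f : α → ((α × β × β) ⊕ (β × α × α)) := fun a =>
      if h : ∀ b, (a, b) ∉ M then (hEX a h).choose else T0 with hf
    have hle : (Finset.univ.filter fun a : α => ∀ b, (a, b) ∉ M).card ≤
        ((flipsA L L'').disjSum (flipsB L L'')).card := by
      apply Finset.card_le_card_of_injOn f
      · intro a ha
        have h := (Finset.mem_filter.1 ha).2
        simp only [hf, dif_pos h]
        exact ((hEX a h).choose_spec).1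
      · intro a ha a' ha' heq
        have h := (Finset.mem_filter.1 (Finset.mem_coe.1 ha)).2
        have h' := (Finset.mem_filter.1 (Finset.mem_coe.1 ha')).2
        simp only [hf, dif_pos h, dif_pos h'] at heq
        obtain ⟨hT, x, hrx, hgood⟩ := (hEX a h).choose_spec
        obtain ⟨hT', x', hrx', hgood'⟩ := (hEX a' h').choose_spec
        rw [← heq] at hgood'
        have hxx : x = x' := by
          rcases hc : (hEX a h).choose with t | t
          · rw [hc] at hgood hgood'
            simp only [Sum.elim_inl] at hgood hgood'
            exact congrArg Prod.fst (hM'.2 _ hgood _ hgood' (Or.inr rfl))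
          · rw [hc] at hgood hgood'
            simp only [Sum.elim_inr] at hgood hgood'
            rw [← hgood, ← hgood']
        subst hxx
        rcases reach_compare x a hrx a' hrx' with hcmp | hcmp
        · exact reach_unmatched a a' h' hcmp
        · exact (reach_unmatched a' a h hcmp).symm
    calc (Finset.univ.filter fun a : α => ∀ b, (a, b) ∉ M).card ≤
        ((flipsA L L'').disjSum (flipsB L L'')).card := hle
      _ = (flipsA L L'').card + (flipsB L L'').card := Finset.card_disjSum _ _

end Main
section Flip
variable {α β : Type*} [DecidableEq α] [DecidableEq β]

lemma mem_swap (N : Finset (α × β)) (x : α) (y : β) :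
    (y, x) ∈ N.image Prod.swap ↔ (x, y) ∈ N := by
  constructor
  · rintro h
    rw [Finset.mem_image] at h
    obtain ⟨p, hp, hps⟩ := h
    have : p = (x, y) := by
      have := congrArg Prod.swap hps
      rwa [Prod.swap_swap] at this
    rwa [this] at hp
  · intro h
    exact Finset.mem_image.2 ⟨(x, y), h, rfl⟩

lemma isMatching_swap {E M : Finset (α × β)} (h : IsMatching E M) :
    IsMatching (E.image Prod.swap) (M.image Prod.swap) := by
  constructor
  · exact Finset.image_subset_image h.1
  · intro e he e' he' hor
    rw [Finset.mem_image] at he he'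
    obtain ⟨p, hp, rfl⟩ := he
    obtain ⟨p', hp', rfl⟩ := he'
    have hpp : p = p' := by
      apply h.2 p hp p' hp'
      rcases hor with h1 | h1
      · exact Or.inr h1
      · exact Or.inl h1
    rw [hpp]

lemma stableM_swap {E : Finset (α × β)} {L : Prefs α β} {M : Finset (α × β)}
    (h : StableM E L M) :
    StableM (E.image Prod.swap) ⟨L.fB, L.fA⟩ (M.image Prod.swap) := by
  rintro ⟨b, a⟩ ⟨h1, h2, h3, h4⟩
  apply h (a, b)
  refine ⟨(mem_swap E a b).1 h1, fun hc => h2 ((mem_swap M a b).2 hc), ?_, ?_⟩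
  · rcases h4 with hh | ⟨y, hy, hp⟩
    · left
      intro bb hbb
      exact hh bb ((mem_swap M a bb).2 hbb)
    · right
      exact ⟨y, (mem_swap M a y).1 hy, hp⟩
  · rcases h3 with hh | ⟨y, hy, hp⟩
    · left
      intro aa haa
      exact hh aa ((mem_swap M aa b).2 haa)
    · right
      exact ⟨y, (mem_swap M y b).1 hy, hp⟩

end Flip

/-- If some sequence of `k` swaps turns `L` into `L'` for which `G`
admits a perfect stable matching, then every stable matching of `(G, L)` leaves
at most `2k` vertices unmatched. -/
theorem unmatched_le_two_mul_swaps {α β : Type*} [Fintype α] [Fintype β]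
    [DecidableEq α] [DecidableEq β]
    (E : Finset (α × β)) (L L' : Prefs α β) (k : ℕ)
    (hL : ValidPrefs E L)
    (hseq : SwapSeq k L L')
    (hperf : ∃ M' : Finset (α × β), IsMatching E M' ∧
      (∀ a, ∃ b, (a, b) ∈ M') ∧ (∀ b, ∃ a, (a, b) ∈ M') ∧ StableM E L' M') :
    ∀ M : Finset (α × β), IsMatching E M → StableM E L M →
      {a : α | ∀ b, (a, b) ∉ M}.ncard + {b : β | ∀ a, (a, b) ∉ M}.ncard ≤ 2 * k := by
  classical
  obtain ⟨M', hM', hpA, hpB, hst'⟩ := hperf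
  intro M hM hst
  obtain ⟨hndA, hndB, hmemA, hmemB⟩ := hL
  obtain ⟨hpermA, hpermB⟩ := swapSeq_perm hseq
  have hndA' : ∀ a, (L'.fA a).Nodup := fun a => (hpermA a).nodup_iff.1 (hndA a)
  have hndB' : ∀ b, (L'.fB b).Nodup := fun b => (hpermB b).nodup_iff.1 (hndB b)
  have hmemA' : ∀ a b, b ∈ L'.fA a ↔ (a, b) ∈ E :=
    fun a b => ((hpermA a).mem_iff).symm.trans (hmemA a b)
  have hmemB' : ∀ a b, a ∈ L'.fB b ↔ (a, b) ∈ E :=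
    fun a b => ((hpermB b).mem_iff).symm.trans (hmemB a b)
  have h1 : (Finset.univ.filter fun a : α => ∀ b, (a, b) ∉ M).card ≤
      (flipsA L L').card + (flipsB L L').card :=
    main_ineq E L L' hndA hndB hmemA hmemB hndA' hndB' hmemA' hmemB' M M' hM hst hM' hpA hst'
  -- flipped instance
  have h2 : (Finset.univ.filter fun b : β => ∀ a, (b, a) ∉ M.image Prod.swap).card ≤
      (flipsA (⟨L.fB, L.fA⟩ : Prefs β α) ⟨L'.fB, L'.fA⟩).card +
        (flipsB (⟨L.fB, L.fA⟩ : Prefs β α) ⟨L'.fB, L'.fA⟩).card := by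
    apply main_ineq (E.image Prod.swap) ⟨L.fB, L.fA⟩ ⟨L'.fB, L'.fA⟩
      hndB hndA
      (fun b a => (hmemB a b).trans (mem_swap E a b).symm)
      (fun b a => (hmemA a b).trans (mem_swap E a b).symm)
      hndB' hndA'
      (fun b a => (hmemB' a b).trans (mem_swap E a b).symm)
      (fun b a => (hmemA' a b).trans (mem_swap E a b).symm)
      (M.image Prod.swap) (M'.image Prod.swap)
      (isMatching_swap hM) (stableM_swap hst) (isMatching_swap hM')
      (fun b => (hpB b).imp fun a ha => (mem_swap M' a b).2 ha)
      (stableM_swap hst')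
  have hflipA : flipsA (⟨L.fB, L.fA⟩ : Prefs β α) ⟨L'.fB, L'.fA⟩ = flipsB L L' := rfl
  have hflipB : flipsB (⟨L.fB, L.fA⟩ : Prefs β α) ⟨L'.fB, L'.fA⟩ = flipsA L L' := rfl
  rw [hflipA, hflipB] at h2
  have h2' : (Finset.univ.filter fun b : β => ∀ a, (a, b) ∉ M).card ≤
      (flipsB L L').card + (flipsA L L').card := by
    refine le_trans (le_of_eq ?_) h2
    congr 1
    apply Finset.filter_congr
    rintro b -
    constructor
    · intro h a hc
      exact h a ((mem_swap M a b).1 hc)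
    · intro h a hc
      exact h a ((mem_swap M a b).2 hc)
  have hbound := flips_bound L hseq hndA hndB
  have hsetA : {a : α | ∀ b, (a, b) ∉ M} =
      ↑(Finset.univ.filter fun a : α => ∀ b, (a, b) ∉ M) := by
    ext a; simp
  have hsetB : {b : β | ∀ a, (a, b) ∉ M} =
      ↑(Finset.univ.filter fun b : β => ∀ a, (a, b) ∉ M) := by
    ext b; simp
  rw [hsetA, hsetB, Set.ncard_coe_finset, Set.ncard_coe_finset]
  omega
end

section
/- For every n ≥ 1, let G be the path v₀ v₁ … v_{2n+1} (a bipartite graph on 2n + 2 vertices) with preference lists such that for every i ∈ {1, …, n}, vertex v_{2i} prefers v_{2i−1} over v_{2i+1} and vertex v_{2i−1} prefers v_{2i} over v_{2i−2}. Then: (a) G admits a perfect matching; (b) M = {v₁v₂, v₃v₄, …, v_{2n−1}v_{2n}} is the unique stable matching of this instance, and it leaves exactly two vertices unmatched; (c) every sequence of swaps that transforms the preference lists into lists for which G admits a perfect stable matching has length at least n. -/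
/-- The path `v₀ v₁ … v_{2n+1}` as a bipartite graph: side `A` consists of the
even-indexed vertices (`a_i = v_{2i}`, `i ≤ n`) and side `B` of the odd-indexed
vertices (`b_j = v_{2j+1}`, `j ≤ n`).  Its edges are `v_{2i} v_{2i+1}`, i.e.
`(i, i)`, and `v_{2j+1} v_{2j+2}`, i.e. `(j+1, j)`. -/
def pathE (n : ℕ) : Finset (ℕ × ℕ) :=
  (Finset.range (n + 1)).image (fun i => (i, i)) ∪
    (Finset.range n).image (fun j => (j + 1, j))

/-- The preference lists of the path instance: for `1 ≤ i ≤ n`, vertex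
`v_{2i}` (= `a_i`) prefers `v_{2i-1}` (= `b_{i-1}`) over `v_{2i+1}` (= `b_i`),
and `v_{2i-1}` (= `b_{i-1}`) prefers `v_{2i}` (= `a_i`) over `v_{2i-2}` (= `a_{i-1}`). -/
def pathL (n : ℕ) : Prefs ℕ ℕ where
  fA := fun i => if i = 0 then [0] else if i ≤ n then [i - 1, i] else []
  fB := fun j => if j < n then [j + 1, j] else if j = n then [n] else []

/-- The matching `M = {v₁v₂, v₃v₄, …, v_{2n-1}v_{2n}}`, i.e. `{(i+1, i) : i < n}`. -/
def pathM (n : ℕ) : Finset (ℕ × ℕ) := (Finset.range n).image (fun j => (j + 1, j))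


section PathHelpers

lemma mem_pathE {n a b : ℕ} :
    (a, b) ∈ pathE n ↔ (a = b ∧ b ≤ n) ∨ (a = b + 1 ∧ b < n) := by
  simp only [pathE, Finset.mem_union, Finset.mem_image, Finset.mem_range, Prod.mk.injEq]
  constructor
  · rintro (⟨i, hi, h1, h2⟩ | ⟨j, hj, h1, h2⟩)
    · left; omega
    · right; omega
  · rintro (⟨h1, h2⟩ | ⟨h1, h2⟩)
    · exact Or.inl ⟨b, by omega, by omega, rfl⟩
    · exact Or.inr ⟨b, by omega, by omega, rfl⟩

lemma mem_pathM {n a b : ℕ} : (a, b) ∈ pathM n ↔ a = b + 1 ∧ b < n := by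
  simp only [pathM, Finset.mem_image, Finset.mem_range, Prod.mk.injEq]
  constructor
  · rintro ⟨j, hj, h1, h2⟩; omega
  · rintro ⟨h1, h2⟩; exact ⟨b, by omega, by omega, rfl⟩

lemma prefers_pair {x y : ℕ} (h : x ≠ y) : PrefersIn [x, y] x y := by
  refine ⟨by simp, ?_⟩
  rw [List.idxOf_cons_self, List.idxOf_cons_ne _ h]
  simp

lemma not_prefers_pair {x y : ℕ} (h : x ≠ y) : ¬ PrefersIn [x, y] y x := by
  rintro ⟨-, hlt⟩
  rw [List.idxOf_cons_self, List.idxOf_cons_ne _ h] at hlt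
  simp at hlt

lemma pathL_fA {n i : ℕ} (h1 : 1 ≤ i) (h2 : i ≤ n) : (pathL n).fA i = [i - 1, i] := by
  simp only [pathL]
  rw [if_neg (by omega), if_pos h2]

lemma pathL_fB {n j : ℕ} (h : j < n) : (pathL n).fB j = [j + 1, j] := by
  simp only [pathL]
  rw [if_pos h]

/-- Bad index: the pair `v_{2i+1} v_{2i+2}`, i.e. edge `(i+1, i)`, is mutually
preferred over the "diagonal" partners. -/
def Bad (i : ℕ) (L : Prefs ℕ ℕ) : Prop :=
  PrefersIn (L.fA (i + 1)) i (i + 1) ∧ PrefersIn (L.fB i) (i + 1) i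

open Classical in
noncomputable def badCount (n : ℕ) (L : Prefs ℕ ℕ) : ℕ :=
  ((Finset.range n).filter (fun i => Bad i L)).card

lemma bad_congr {L L' : Prefs ℕ ℕ} {i : ℕ}
    (hA : L'.fA (i + 1) = L.fA (i + 1)) (hB : L'.fB i = L.fB i) :
    Bad i L' ↔ Bad i L := by
  unfold Bad; rw [hA, hB]

lemma swapStep_badCount {n : ℕ} {L L' : Prefs ℕ ℕ} (h : SwapStep L L') :
    badCount n L ≤ badCount n L' + 1 := by
  classical
  obtain ⟨j, hj⟩ : ∃ j, ∀ i, i ≠ j → (Bad i L' ↔ Bad i L) := by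
    rcases h with ⟨a, _, hA, hB⟩ | ⟨b, _, hB, hA⟩
    · exact ⟨a - 1, fun i hi => bad_congr (hA _ (by omega)) (hB i)⟩
    · exact ⟨b, fun i hi => bad_congr (hA _) (hB i hi)⟩
  have hsub : (Finset.range n).filter (fun i => Bad i L) ⊆
      insert j ((Finset.range n).filter (fun i => Bad i L')) := by
    intro i hi
    rw [Finset.mem_filter] at hi
    by_cases hij : i = j
    · subst hij; exact Finset.mem_insert_self _ _
    · exact Finset.mem_insert_of_mem (Finset.mem_filter.2 ⟨hi.1, (hj i hij).2 hi.2⟩)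
  calc badCount n L ≤ (insert j ((Finset.range n).filter (fun i => Bad i L'))).card :=
        Finset.card_le_card hsub
    _ ≤ badCount n L' + 1 := Finset.card_insert_le _ _

lemma swapSeq_badCount {n : ℕ} : ∀ (k : ℕ) (L L' : Prefs ℕ ℕ), SwapSeq k L L' →
    badCount n L ≤ badCount n L' + k := by
  intro k
  induction k with
  | zero => intro L L' h; subst h; simp
  | succ k ih =>
    rintro L L' ⟨L'', h1, h2⟩
    have := swapStep_badCount (n := n) h1
    have := ih L'' L' h2
    omega

lemma badCount_pathL (n : ℕ) : badCount n (pathL n) = n := by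
  classical
  unfold badCount
  rw [Finset.filter_true_of_mem, Finset.card_range]
  intro i hi
  rw [Finset.mem_range] at hi
  constructor
  · rw [pathL_fA (by omega) (by omega)]
    have : i + 1 - 1 = i := by omega
    rw [this]
    exact prefers_pair (by omega)
  · rw [pathL_fB hi]
    exact prefers_pair (by omega)

/-- In a perfect matching of the path, all diagonal edges are present. -/
lemma diag_mem {n : ℕ} {M : Finset (ℕ × ℕ)} (hM : IsMatching (pathE n) M)
    (hA : ∀ a ≤ n, ∃ b, (a, b) ∈ M) : ∀ i, i ≤ n → (i, i) ∈ M := by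
  intro i
  induction i with
  | zero =>
    intro _
    obtain ⟨b, hb⟩ := hA 0 (Nat.zero_le n)
    have hE := mem_pathE.mp (hM.1 hb)
    have : b = 0 := by omega
    rwa [this] at hb
  | succ i ih =>
    intro hin
    have hi := ih (by omega)
    obtain ⟨b, hb⟩ := hA (i + 1) hin
    have hE := mem_pathE.mp (hM.1 hb)
    have hb' : b = i + 1 ∨ b = i := by omega
    rcases hb' with rfl | rfl
    · exact hb
    · have := hM.2 _ hb _ hi (Or.inr rfl)
      simp only [Prod.mk.injEq] at this
      omega

lemma stable_perfect_noBad {n : ℕ} {L : Prefs ℕ ℕ} {M : Finset (ℕ × ℕ)}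
    (hM : IsMatching (pathE n) M) (hA : ∀ a ≤ n, ∃ b, (a, b) ∈ M)
    (hS : StableM (pathE n) L M) : ∀ i < n, ¬ Bad i L := by
  intro i hi hbad
  have hd := diag_mem hM hA
  apply hS (i + 1, i)
  refine ⟨mem_pathE.mpr (Or.inr ⟨rfl, hi⟩), ?_, ?_, ?_⟩
  · intro h
    have := hM.2 _ h _ (hd i (by omega)) (Or.inr rfl)
    simp only [Prod.mk.injEq] at this
    omega
  · exact Or.inr ⟨i + 1, hd (i + 1) hi, hbad.1⟩
  · exact Or.inr ⟨i, hd i (by omega), hbad.2⟩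

lemma badCount_eq_zero {n : ℕ} {L : Prefs ℕ ℕ} (h : ∀ i < n, ¬ Bad i L) :
    badCount n L = 0 := by
  classical
  unfold badCount
  rw [Finset.card_eq_zero, Finset.filter_eq_empty_iff]
  intro i hi
  exact h i (Finset.mem_range.mp hi)

lemma pathM_subset {n : ℕ} {M : Finset (ℕ × ℕ)}
    (hM : IsMatching (pathE n) M) (hS : StableM (pathE n) (pathL n) M) :
    pathM n ⊆ M := by
  intro e he
  obtain ⟨a, b⟩ := e
  obtain ⟨rfl, hb⟩ := mem_pathM.mp he
  by_contra h
  apply hS (b + 1, b)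
  refine ⟨mem_pathE.mpr (Or.inr ⟨rfl, hb⟩), h, ?_, ?_⟩
  · by_cases hm : ∃ b', (b + 1, b') ∈ M
    · obtain ⟨b', hb'⟩ := hm
      have hE := mem_pathE.mp (hM.1 hb')
      have : b' = b + 1 ∨ b' = b := by omega
      rcases this with rfl | rfl
      · refine Or.inr ⟨b + 1, hb', ?_⟩
        rw [pathL_fA (by omega) (by omega)]
        have : b + 1 - 1 = b := by omega
        rw [this]
        exact prefers_pair (by omega)
      · exact absurd hb' h
    · push_neg at hm
      exact Or.inl hm
  · by_cases hm : ∃ a, (a, b) ∈ M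
    · obtain ⟨a, ha⟩ := hm
      have hE := mem_pathE.mp (hM.1 ha)
      have : a = b ∨ a = b + 1 := by omega
      rcases this with rfl | rfl
      · refine Or.inr ⟨a, ha, ?_⟩
        rw [pathL_fB hb]
        exact prefers_pair (by omega)
      · exact absurd ha h
    · push_neg at hm
      exact Or.inl hm

lemma stable_unique {n : ℕ} (hn : 1 ≤ n) {M : Finset (ℕ × ℕ)}
    (hM : IsMatching (pathE n) M) (hS : StableM (pathE n) (pathL n) M) :
    M = pathM n := by
  refine Finset.Subset.antisymm ?_ (pathM_subset hM hS)
  intro e he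
  obtain ⟨a, b⟩ := e
  have hE := mem_pathE.mp (hM.1 he)
  rcases hE with ⟨rfl, hb⟩ | ⟨rfl, hb⟩
  · exfalso
    by_cases hb0 : a = 0
    · subst hb0
      have h10 : (1, 0) ∈ M := pathM_subset hM hS (mem_pathM.mpr ⟨rfl, hn⟩)
      have := hM.2 _ he _ h10 (Or.inr rfl)
      simp only [Prod.mk.injEq] at this
      omega
    · have h' : (a, a - 1) ∈ M :=
        pathM_subset hM hS (mem_pathM.mpr ⟨by omega, by omega⟩)
      have := hM.2 _ he _ h' (Or.inl rfl)
      simp only [Prod.mk.injEq] at this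
      omega
  · exact mem_pathM.mpr ⟨rfl, hb⟩

end PathHelpers
/-- For every `n ≥ 1` the path instance satisfies:
(a) the graph admits a perfect matching;
(b) `pathM n` is the unique stable matching, and it leaves exactly two vertices
    unmatched;
(c) every sequence of swaps leading to preference lists admitting a perfect
    stable matching has length at least `n`. -/
theorem path_instance_needs_n_swaps (n : ℕ) (hn : 1 ≤ n) :
    (∃ M : Finset (ℕ × ℕ), IsMatching (pathE n) M ∧
      (∀ a ≤ n, ∃ b, (a, b) ∈ M) ∧ (∀ b ≤ n, ∃ a, (a, b) ∈ M)) ∧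
    (IsMatching (pathE n) (pathM n) ∧ StableM (pathE n) (pathL n) (pathM n) ∧
      (∀ M : Finset (ℕ × ℕ), IsMatching (pathE n) M → StableM (pathE n) (pathL n) M →
        M = pathM n) ∧
      {a : ℕ | a ≤ n ∧ ∀ b, (a, b) ∉ pathM n}.ncard +
        {b : ℕ | b ≤ n ∧ ∀ a, (a, b) ∉ pathM n}.ncard = 2) ∧
    (∀ (k : ℕ) (L' : Prefs ℕ ℕ), SwapSeq k (pathL n) L' →
      (∃ M : Finset (ℕ × ℕ), IsMatching (pathE n) M ∧
        (∀ a ≤ n, ∃ b, (a, b) ∈ M) ∧ (∀ b ≤ n, ∃ a, (a, b) ∈ M) ∧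
        StableM (pathE n) L' M) →
      n ≤ k) := by
  refine ⟨?_, ⟨?_, ?_, ?_, ?_⟩, ?_⟩
  · -- (a) perfect matching
    refine ⟨(Finset.range (n + 1)).image (fun i => (i, i)), ⟨?_, ?_⟩, ?_, ?_⟩
    · intro e he
      obtain ⟨i, hi, rfl⟩ := Finset.mem_image.mp he
      rw [Finset.mem_range] at hi
      exact mem_pathE.mpr (Or.inl ⟨rfl, by omega⟩)
    · intro e he e' he'
      obtain ⟨i, hi, rfl⟩ := Finset.mem_image.mp he
      obtain ⟨i', hi', rfl⟩ := Finset.mem_image.mp he'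
      rintro (h | h) <;> simp_all
    · intro a ha
      exact ⟨a, Finset.mem_image.mpr ⟨a, Finset.mem_range.mpr (by omega), rfl⟩⟩
    · intro b hb
      exact ⟨b, Finset.mem_image.mpr ⟨b, Finset.mem_range.mpr (by omega), rfl⟩⟩
  · -- pathM is a matching
    constructor
    · intro e he
      obtain ⟨a, b⟩ := e
      exact mem_pathE.mpr (Or.inr (mem_pathM.mp he))
    · intro e he e' he'
      obtain ⟨a, b⟩ := e; obtain ⟨a', b'⟩ := e'
      obtain ⟨rfl, -⟩ := mem_pathM.mp he
      obtain ⟨rfl, -⟩ := mem_pathM.mp he'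
      rintro (h | h) <;> simp_all
  · -- pathM is stable
    rintro ⟨a, b⟩ ⟨hE, hNM, hA, hB⟩
    rcases mem_pathE.mp hE with ⟨rfl, hb⟩ | hab
    · -- diagonal edge (a, a)
      by_cases hb0 : a = 0
      · subst hb0
        rcases hB with h | ⟨a', ha, hp⟩
        · exact h 1 (mem_pathM.mpr ⟨rfl, hn⟩)
        · obtain ⟨rfl, -⟩ := mem_pathM.mp ha
          rw [pathL_fB hn] at hp
          exact not_prefers_pair (by omega) hp
      · rcases hA with h | ⟨b', hb', hp⟩
        · exact h (a - 1) (mem_pathM.mpr ⟨by omega, by omega⟩)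
        · obtain ⟨hbb, hbn⟩ := mem_pathM.mp hb'
          rw [pathL_fA (by omega) hb] at hp
          have : b' = a - 1 := by omega
          subst this
          exact not_prefers_pair (by omega) hp
    · exact hNM (mem_pathM.mpr hab)
  · -- uniqueness
    intro M hM hS
    exact stable_unique hn hM hS
  · -- unmatched count
    have hA0 : {a : ℕ | a ≤ n ∧ ∀ b, (a, b) ∉ pathM n} = {0} := by
      ext a
      simp only [Set.mem_setOf_eq, Set.mem_singleton_iff]
      constructor
      · rintro ⟨han, h⟩
        by_contra ha
        exact h (a - 1) (mem_pathM.mpr ⟨by omega, by omega⟩)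
      · rintro rfl
        refine ⟨Nat.zero_le n, fun b hb => ?_⟩
        have := mem_pathM.mp hb
        omega
    have hB0 : {b : ℕ | b ≤ n ∧ ∀ a, (a, b) ∉ pathM n} = {n} := by
      ext b
      simp only [Set.mem_setOf_eq, Set.mem_singleton_iff]
      constructor
      · rintro ⟨hbn, h⟩
        by_contra hb
        exact h (b + 1) (mem_pathM.mpr ⟨rfl, by omega⟩)
      · rintro rfl
        refine ⟨le_rfl, fun a ha => ?_⟩
        have := mem_pathM.mp ha
        omega
    rw [hA0, hB0, Set.ncard_singleton, Set.ncard_singleton]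
  · -- (c) lower bound on number of swaps
    rintro k L' hseq ⟨M, hM, hA, hB, hS⟩
    have h1 : badCount n (pathL n) ≤ badCount n L' + k := swapSeq_badCount k _ _ hseq
    rw [badCount_pathL, badCount_eq_zero (stable_perfect_noBad hM hA hS)] at h1
    omega
end

section
/- Fix a finite list with a designated set of blue positions and let X be a set of non-blue positions. For F ⊆ X define f(F) to be the minimum length of a sequence of adjacent transpositions after which every element of F occurs below every blue element in the resulting list. Then f : P(X) → ℕ is submodular; that is, f(Y) + f(Z) ≥ f(Y ∪ Z) + f(Y ∩ Z) for all Y, Z ⊆ X. -/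
/-- `SwapSeqL k l l'` : `l'` is obtained from `l` by a sequence of `k`
adjacent transpositions. -/
def SwapSeqL {γ : Type*} : ℕ → List γ → List γ → Prop
  | 0, l, l' => l' = l
  | k + 1, l, l' => ∃ l'', AdjSwap l l'' ∧ SwapSeqL k l'' l'

/-- We represent the original list `(a₁, …, a_d)` by `List.finRange d` with a
designated set `blue` of blue positions.  For a set `F` of positions,
`costF blue F` is the minimum length of a sequence of adjacent transpositions
after which every element of `F` occurs below (after) every blue element. -/
noncomputable def costF {d : ℕ} (blue : Finset (Fin d)) (F : Finset (Fin d)) : ℕ :=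
  sInf {k : ℕ | ∃ l' : List (Fin d), SwapSeqL k (List.finRange d) l' ∧
      ∀ x ∈ F, ∀ b ∈ blue, l'.idxOf b < l'.idxOf x}

namespace CostFAux

open List

variable {γ : Type*}

/-- number of pairs `(x, s)` with `x` before `s` in `l`, `¬ p x`, `p s`. -/
def cc (p : γ → Bool) : List γ → ℕ
  | [] => 0
  | a :: t => (if p a then 0 else t.countP p) + cc p t

lemma adjSwap_perm {l l' : List γ} (h : AdjSwap l l') : l'.Perm l := by
  obtain ⟨pp, s, x, y, rfl, rfl⟩ := h
  exact List.Perm.append_left pp (List.Perm.swap x y s)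

lemma swapSeqL_perm : ∀ (k : ℕ) {l l' : List γ}, SwapSeqL k l l' → l'.Perm l := by
  intro k
  induction k with
  | zero => intro l l' h; rw [h]
  | succ k ih =>
    rintro l l' ⟨l'', hsw, hseq⟩
    exact (ih hseq).trans (adjSwap_perm hsw)

lemma cc_append_swap (p : γ → Bool) (x y : γ) (s : List γ) :
    ∀ (pp : List γ), cc p (pp ++ x :: y :: s) ≤ cc p (pp ++ y :: x :: s) + 1 := by
  intro pp
  induction pp with
  | nil =>
    simp only [List.nil_append, cc, List.countP_cons]
    split_ifs <;> omega
  | cons a t ih =>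
    simp only [List.cons_append, cc, List.append_eq]
    have hperm : (t ++ x :: y :: s).countP p = (t ++ y :: x :: s).countP p :=
      List.Perm.countP_eq _ (List.Perm.append_left t (List.Perm.swap y x s))
    rw [hperm]
    omega

lemma cc_adjSwap (p : γ → Bool) {l l' : List γ} (h : AdjSwap l l') :
    cc p l ≤ cc p l' + 1 := by
  obtain ⟨pp, s, x, y, rfl, rfl⟩ := h
  exact cc_append_swap p x y s pp

lemma cc_swapSeq (p : γ → Bool) : ∀ (k : ℕ) {l l' : List γ}, SwapSeqL k l l' →
    cc p l ≤ cc p l' + k := by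
  intro k
  induction k with
  | zero => intro l l' h; rw [h]; omega
  | succ k ih =>
    rintro l l' ⟨l'', hsw, hseq⟩
    have h1 := cc_adjSwap p hsw
    have h2 := ih hseq
    omega

lemma cc_eq_zero (p : γ → Bool) {l : List γ}
    (h : l.Pairwise fun a b => p b = true → p a = true) : cc p l = 0 := by
  induction l with
  | nil => rfl
  | cons a t ih =>
    rw [List.pairwise_cons] at h
    have ht := ih h.2
    simp only [cc, ht, Nat.add_zero]
    split_ifs with ha
    · rfl
    · rw [List.countP_eq_zero]
      intro b hb hpb
      exact ha (h.1 b hb hpb)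

lemma adjSwap_cons (a : γ) {t t' : List γ} (h : AdjSwap t t') : AdjSwap (a :: t) (a :: t') := by
  obtain ⟨pp, s, x, y, rfl, rfl⟩ := h
  exact ⟨a :: pp, s, x, y, rfl, rfl⟩

lemma swapSeqL_cons (a : γ) : ∀ (k : ℕ) {t t' : List γ}, SwapSeqL k t t' →
    SwapSeqL k (a :: t) (a :: t') := by
  intro k
  induction k with
  | zero => intro t t' h; rw [h]; rfl
  | succ k ih =>
    rintro t t' ⟨t'', hsw, hseq⟩
    exact ⟨a :: t'', adjSwap_cons a hsw, ih hseq⟩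

lemma swapSeqL_trans : ∀ (k1 : ℕ) {k2 : ℕ} {l1 l2 l3 : List γ},
    SwapSeqL k1 l1 l2 → SwapSeqL k2 l2 l3 → SwapSeqL (k1 + k2) l1 l3 := by
  intro k1
  induction k1 with
  | zero =>
    intro k2 l1 l2 l3 h1 h2
    rw [h1] at h2
    simpa using h2
  | succ k ih =>
    rintro k2 l1 l2 l3 ⟨l'', hsw, hseq⟩ h2
    rw [Nat.succ_add]
    exact ⟨l'', hsw, ih hseq h2⟩

lemma swapSeqL_bubble (a : γ) (s : List γ) :
    ∀ (m : List γ), SwapSeqL m.length (a :: (m ++ s)) (m ++ a :: s) := by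
  intro m
  induction m with
  | nil => rfl
  | cons c m' ih =>
    refine ⟨c :: a :: (m' ++ s), ⟨[], m' ++ s, a, c, rfl, rfl⟩, ?_⟩
    exact swapSeqL_cons c _ ih

lemma swapSeqL_filter (p : γ → Bool) :
    ∀ l : List γ, SwapSeqL (cc p l) l (l.filter p ++ l.filter (fun a => !p a)) := by
  intro l
  induction l with
  | nil => rfl
  | cons a t ih =>
    by_cases h : p a = true
    · have : cc p (a :: t) = cc p t := by simp [cc, h]
      rw [this, List.filter_cons_of_pos h, List.filter_cons_of_neg (by simp [h]),
        List.cons_append]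
      exact swapSeqL_cons a _ ih
    · have hcc : cc p (a :: t) = cc p t + (t.filter p).length := by
        simp [cc, h, List.countP_eq_length_filter]; omega
      rw [hcc, List.filter_cons_of_neg (by simp [h]), List.filter_cons_of_pos (by simp [h])]
      refine swapSeqL_trans _ (swapSeqL_cons a _ ih) ?_
      exact swapSeqL_bubble a _ _

section FinD

variable {d : ℕ}

lemma countP_mem_modular (A B : Finset (Fin d)) (t : List (Fin d)) :
    t.countP (fun a => decide (a ∈ A ∪ B)) + t.countP (fun a => decide (a ∈ A ∩ B)) =
      t.countP (fun a => decide (a ∈ A)) + t.countP (fun a => decide (a ∈ B)) := by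
  induction t with
  | nil => rfl
  | cons a t ih =>
    simp only [List.countP_cons]
    by_cases hA : a ∈ A <;> by_cases hB : a ∈ B
    · rw [if_pos (by simp [Finset.mem_union, hA]), if_pos (by simp [Finset.mem_inter, hA, hB]),
        if_pos (by simp [hA]), if_pos (by simp [hB])]
      omega
    · rw [if_pos (by simp [Finset.mem_union, hA]), if_neg (by simp [Finset.mem_inter, hA, hB]),
        if_pos (by simp [hA]), if_neg (by simp [hB])]
      omega
    · rw [if_pos (by simp [Finset.mem_union, hB]), if_neg (by simp [Finset.mem_inter, hA, hB]),
        if_neg (by simp [hA]), if_pos (by simp [hB])]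
      omega
    · rw [if_neg (by simp [Finset.mem_union, hA, hB]), if_neg (by simp [Finset.mem_inter, hA, hB]),
        if_neg (by simp [hA]), if_neg (by simp [hB])]
      omega

lemma countP_mem_mono {A B : Finset (Fin d)} (h : A ⊆ B) (t : List (Fin d)) :
    t.countP (fun a => decide (a ∈ A)) ≤ t.countP (fun a => decide (a ∈ B)) := by
  induction t with
  | nil => exact le_rfl
  | cons a t ih =>
    simp only [List.countP_cons]
    by_cases hA : a ∈ A
    · rw [if_pos (by simp [hA]), if_pos (by simp [h hA])]; omega
    · rw [if_neg (by simp [hA])]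
      by_cases hB : a ∈ B
      · rw [if_pos (by simp [hB])]; omega
      · rw [if_neg (by simp [hB])]; omega

lemma cc_submod (A B : Finset (Fin d)) (l : List (Fin d)) :
    cc (fun a => decide (a ∈ A ∪ B)) l + cc (fun a => decide (a ∈ A ∩ B)) l ≤
      cc (fun a => decide (a ∈ A)) l + cc (fun a => decide (a ∈ B)) l := by
  induction l with
  | nil => exact le_rfl
  | cons a t ih =>
    simp only [cc]
    have hmod := countP_mem_modular A B t
    have hmonoA : t.countP (fun a => decide (a ∈ A ∩ B)) ≤ t.countP (fun a => decide (a ∈ A)) :=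
      countP_mem_mono (Finset.inter_subset_left) t
    have hmonoB : t.countP (fun a => decide (a ∈ A ∩ B)) ≤ t.countP (fun a => decide (a ∈ B)) :=
      countP_mem_mono (Finset.inter_subset_right) t
    by_cases hA : a ∈ A <;> by_cases hB : a ∈ B
    · rw [if_pos (by simp [Finset.mem_union, hA]), if_pos (by simp [Finset.mem_inter, hA, hB]),
        if_pos (by simp [hA]), if_pos (by simp [hB])]
      omega
    · rw [if_pos (by simp [Finset.mem_union, hA]), if_neg (by simp [Finset.mem_inter, hA, hB]),
        if_pos (by simp [hA]), if_neg (by simp [hB])]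
      omega
    · rw [if_pos (by simp [Finset.mem_union, hB]), if_neg (by simp [Finset.mem_inter, hA, hB]),
        if_neg (by simp [hA]), if_pos (by simp [hB])]
      omega
    · rw [if_neg (by simp [Finset.mem_union, hA, hB]), if_neg (by simp [Finset.mem_inter, hA, hB]),
        if_neg (by simp [hA]), if_neg (by simp [hB])]
      omega

/-- Upper bound: membership in the `costF` defining set from a separating set `S`. -/
lemma mem_costSet (blue F S : Finset (Fin d)) (hBS : blue ⊆ S) (hSF : ∀ x ∈ F, x ∉ S) :
    cc (fun a => decide (a ∈ S)) (List.finRange d) ∈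
      {k : ℕ | ∃ l' : List (Fin d), SwapSeqL k (List.finRange d) l' ∧
        ∀ x ∈ F, ∀ b ∈ blue, l'.idxOf b < l'.idxOf x} := by
  refine ⟨_, swapSeqL_filter _ _, ?_⟩
  intro x hx b hb
  have hbmem : b ∈ (List.finRange d).filter (fun a => decide (a ∈ S)) := by
    simp [List.mem_filter, List.mem_finRange, hBS hb]
  have hxnot : x ∉ (List.finRange d).filter (fun a => decide (a ∈ S)) := by
    simp [List.mem_filter, hSF x hx]
  rw [List.idxOf_append_of_mem hbmem, List.idxOf_append_of_notMem hxnot]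
  have h1 : List.idxOf b ((List.finRange d).filter (fun a => decide (a ∈ S))) <
      ((List.finRange d).filter (fun a => decide (a ∈ S))).length :=
    List.idxOf_lt_length_iff.2 hbmem
  omega

end FinD

end CostFAux

open CostFAux in
/-- for a fixed set `blue` of blue positions and a set `X` of
non-blue positions, the function `F ↦ costF blue F` is submodular on `P(X)`. -/
theorem costF_submodular (d : ℕ) (blue X : Finset (Fin d)) (hdisj : Disjoint blue X)
    (Y Z : Finset (Fin d)) (hY : Y ⊆ X) (hZ : Z ⊆ X) :
    costF blue (Y ∪ Z) + costF blue (Y ∩ Z) ≤ costF blue Y + costF blue Z := by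
  classical
  -- the defining sets
  set P : Finset (Fin d) → Set ℕ := fun F =>
    {k : ℕ | ∃ l' : List (Fin d), SwapSeqL k (List.finRange d) l' ∧
      ∀ x ∈ F, ∀ b ∈ blue, l'.idxOf b < l'.idxOf x} with hP
  have hblue_nX : ∀ b ∈ blue, b ∉ X := fun b hb hx =>
    (Finset.disjoint_left.1 hdisj) hb hx
  -- nonemptiness of the defining sets for F ⊆ X
  have hne : ∀ F : Finset (Fin d), F ⊆ X → (P F).Nonempty := by
    intro F hF
    exact ⟨_, mem_costSet blue F (Finset.univ \ X)
      (fun b hb => Finset.mem_sdiff.2 ⟨Finset.mem_univ b, hblue_nX b hb⟩)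
      (fun x hx hmem => (Finset.mem_sdiff.1 hmem).2 (hF hx))⟩
  -- extraction of a separating set from an optimal list
  have extract : ∀ F : Finset (Fin d), F ⊆ X → ∃ S : Finset (Fin d),
      blue ⊆ S ∧ (∀ x ∈ F, x ∉ S) ∧
      cc (fun a => decide (a ∈ S)) (List.finRange d) ≤ costF blue F := by
    intro F hF
    obtain ⟨l', hseq, hval⟩ := Nat.sInf_mem (hne F hF)
    have hnodup : l'.Nodup := ((swapSeqL_perm _ hseq).nodup_iff).2 (List.nodup_finRange d)
    set S : Finset (Fin d) :=
      Finset.univ.filter (fun a => ∃ b ∈ blue, l'.idxOf a ≤ l'.idxOf b) with hS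
    have hmemS : ∀ a : Fin d, a ∈ S ↔ ∃ b ∈ blue, l'.idxOf a ≤ l'.idxOf b := by
      intro a; simp [hS]
    refine ⟨S, ?_, ?_, ?_⟩
    · intro b hb
      exact (hmemS b).2 ⟨b, hb, le_refl _⟩
    · intro x hx hxS
      obtain ⟨b, hb, hle⟩ := (hmemS x).1 hxS
      exact absurd (hval x hx b hb) (by omega)
    · have hzero : cc (fun a => decide (a ∈ S)) l' = 0 := by
        refine cc_eq_zero _ ?_
        rw [List.pairwise_iff_getElem]
        intro i j hi hj hij
        simp only [decide_eq_true_eq, hmemS]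
        rintro ⟨b, hb, hle⟩
        refine ⟨b, hb, ?_⟩
        rw [hnodup.idxOf_getElem j hj] at hle
        rw [hnodup.idxOf_getElem i hi]
        omega
      have := cc_swapSeq (fun a => decide (a ∈ S)) _ hseq
      rw [hzero] at this
      simp at this; exact this
  obtain ⟨SY, hSYb, hSYF, hSYle⟩ := extract Y hY
  obtain ⟨SZ, hSZb, hSZF, hSZle⟩ := extract Z hZ
  have hU : costF blue (Y ∪ Z) ≤ cc (fun a => decide (a ∈ SY ∩ SZ)) (List.finRange d) := by
    refine Nat.sInf_le (mem_costSet blue (Y ∪ Z) (SY ∩ SZ) ?_ ?_)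
    · exact fun b hb => Finset.mem_inter.2 ⟨hSYb hb, hSZb hb⟩
    · intro x hx hmem
      rcases Finset.mem_union.1 hx with h | h
      · exact hSYF x h (Finset.mem_inter.1 hmem).1
      · exact hSZF x h (Finset.mem_inter.1 hmem).2
  have hI : costF blue (Y ∩ Z) ≤ cc (fun a => decide (a ∈ SY ∪ SZ)) (List.finRange d) := by
    refine Nat.sInf_le (mem_costSet blue (Y ∩ Z) (SY ∪ SZ) ?_ ?_)
    · exact fun b hb => Finset.mem_union.2 (Or.inl (hSYb hb))
    · intro x hx hmem
      rcases Finset.mem_union.1 hmem with h | h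
      · exact hSYF x (Finset.mem_inter.1 hx).1 h
      · exact hSZF x (Finset.mem_inter.1 hx).2 h
  have hsub := cc_submod SY SZ (List.finRange d)
  omega
end

section
/- Let (G = (A, B; E), c, L) be a capacitated SMP instance and S a subgraph of G with d_S(v) ≤ c(v) for every vertex v. Let E_b be the set of blocking edges of S, let E_b^A = {ab ∈ E_b : d_S(a) = c(a)} and E_b^B = {ab ∈ E_b : d_S(b) = c(b)}. For a ∈ A and F ⊆ E_b, let f_a(F) be the minimum number of swaps within ℓ(a) after which every b with ab ∈ F appears in ℓ(a) below every S-neighbor of a; define g_b(F) for b ∈ B analogously on ℓ(b). Let h(F) = Σ_{a∈A} f_a(F) + Σ_{b∈B} g_b(E_b ∖ F). Then: (i) there exists a finite sequence of swaps after which S is stable if and only if E_b = E_b^A ∪ E_b^B; and (ii) in that case, the minimum length of such a sequence equals min{ h(F) : E_b ∖ E_b^B ⊆ F ⊆ E_b^A }. -/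
/-- Degree of `a : α` in the subgraph `S`. -/
def degA {α β : Type*} [DecidableEq α] (S : Finset (α × β)) (a : α) : ℕ :=
  (S.filter (fun e => e.1 = a)).card

/-- Degree of `b : β` in the subgraph `S`. -/
def degB {α β : Type*} [DecidableEq β] (S : Finset (α × β)) (b : β) : ℕ :=
  (S.filter (fun e => e.2 = b)).card

/-- `e` is a blocking edge of the subgraph `S` in the capacitated SMP instance
`(E, cA, cB, L)`. -/
def CapBlocking {α β : Type*} [DecidableEq α] [DecidableEq β]
    (E : Finset (α × β)) (cA : α → ℕ) (cB : β → ℕ) (L : Prefs α β)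
    (S : Finset (α × β)) (e : α × β) : Prop :=
  e ∈ E ∧ e ∉ S ∧
  (degA S e.1 < cA e.1 ∨ ∃ b', (e.1, b') ∈ S ∧ PrefersIn (L.fA e.1) e.2 b') ∧
  (degB S e.2 < cB e.2 ∨ ∃ a', (a', e.2) ∈ S ∧ PrefersIn (L.fB e.2) e.1 a')

/-- `S` is stable in the capacitated instance `(E, cA, cB, L)`. -/
def CapStable {α β : Type*} [DecidableEq α] [DecidableEq β]
    (E : Finset (α × β)) (cA : α → ℕ) (cB : β → ℕ) (L : Prefs α β)
    (S : Finset (α × β)) : Prop :=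
  ∀ e, ¬ CapBlocking E cA cB L S e

/-- `fCost L S a F` : the minimum number of swaps within the list `ℓ(a)` after
which, for every `b` with `(a, b) ∈ F`, the vertex `b` appears below every
`S`-neighbor of `a`. -/
noncomputable def fCost {α β : Type*} [DecidableEq β] (L : Prefs α β)
    (S : Finset (α × β)) (a : α) (F : Set (α × β)) : ℕ :=
  sInf {k : ℕ | ∃ l' : List β, SwapSeqL k (L.fA a) l' ∧
      ∀ b, (a, b) ∈ F → ∀ b', (a, b') ∈ S → l'.idxOf b' < l'.idxOf b}

/-- `gCost L S b F` : the minimum number of swaps within the list `ℓ(b)` after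
which, for every `a` with `(a, b) ∈ F`, the vertex `a` appears below every
`S`-neighbor of `b`. -/
noncomputable def gCost {α β : Type*} [DecidableEq α] (L : Prefs α β)
    (S : Finset (α × β)) (b : β) (F : Set (α × β)) : ℕ :=
  sInf {k : ℕ | ∃ l' : List α, SwapSeqL k (L.fB b) l' ∧
      ∀ a, (a, b) ∈ F → ∀ a', (a', b) ∈ S → l'.idxOf a' < l'.idxOf a}

/-- `hCost E cA cB L S F = Σ_{a ∈ A} f_a(F) + Σ_{b ∈ B} g_b(E_b ∖ F)`. -/
noncomputable def hCost {α β : Type*} [Fintype α] [Fintype β]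
    [DecidableEq α] [DecidableEq β]
    (E : Finset (α × β)) (cA : α → ℕ) (cB : β → ℕ) (L : Prefs α β)
    (S : Finset (α × β)) (F : Set (α × β)) : ℕ :=
  (∑ a : α, fCost L S a F) +
    (∑ b : β, gCost L S b ({e | CapBlocking E cA cB L S e} \ F))


set_option linter.unusedSectionVars false
namespace MS

variable {γ : Type*} [DecidableEq γ]

theorem adjSwap_perm {l l' : List γ} (h : AdjSwap l l') : l'.Perm l := by
  obtain ⟨p, s, x, y, rfl, rfl⟩ := h
  exact (List.Perm.append_left p (List.Perm.swap x y s))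

theorem swapSeqL_zero {l l' : List γ} (h : SwapSeqL 0 l l') : l' = l := h

theorem swapSeqL_perm : ∀ {k : ℕ} {l l' : List γ}, SwapSeqL k l l' → l'.Perm l
  | 0, l, l', h => by rw [swapSeqL_zero h]
  | k + 1, l, l', ⟨l'', h1, h2⟩ => (swapSeqL_perm h2).trans (adjSwap_perm h1)

theorem swapSeqL_trans : ∀ {k1 k2 : ℕ} {l m r : List γ},
    SwapSeqL k1 l m → SwapSeqL k2 m r → SwapSeqL (k1 + k2) l r
  | 0, k2, l, m, r, h1, h2 => by rw [swapSeqL_zero h1] at h2; simpa [Nat.zero_add] using h2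
  | k1 + 1, k2, l, m, r, ⟨l'', ha, hs⟩, h2 => by
      have h3 : SwapSeqL (k1 + k2) l'' r := swapSeqL_trans hs h2
      have e : k1 + 1 + k2 = k1 + k2 + 1 := by omega
      rw [e]; exact ⟨l'', ha, h3⟩

theorem swapSeqL_snoc {k : ℕ} {l m m' : List γ} (h : SwapSeqL k l m) (h2 : AdjSwap m m') :
    SwapSeqL (k + 1) l m' :=
  swapSeqL_trans h ⟨m', h2, rfl⟩

theorem swapSeqL_cons : ∀ {k : ℕ} {m m' : List γ} (c : γ),
    SwapSeqL k m m' → SwapSeqL k (c :: m) (c :: m')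
  | 0, m, m', c, h => by rw [swapSeqL_zero h]; rfl
  | k + 1, m, m', c, ⟨l'', ⟨p, s, x, y, hp1, hp2⟩, hs⟩ =>
      ⟨c :: l'', ⟨c :: p, s, x, y, by simp [hp1], by simp [hp2]⟩, swapSeqL_cons c hs⟩

/-! ### index lemmas -/

theorem idx_append_right {a : γ} : ∀ {p : List γ} (m : List γ), a ∉ p →
    (p ++ m).idxOf a = p.length + m.idxOf a
  | [], m, _ => by simp
  | c :: p, m, h => by
      have hac : a ≠ c := by intro e; exact h (by simp [e])
      have := idx_append_right (a := a) (p := p) m (fun hm => h (by simp [hm]))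
      simp only [List.cons_append, List.idxOf_cons_ne _ hac.symm, this, List.length_cons]
      omega

theorem idx_erase {l : List γ} (hl : l.Nodup) {x y : γ} (hy : y ∈ l) (hxy : y ≠ x) :
    (l.erase x).idxOf y =
      if l.idxOf y < l.idxOf x then l.idxOf y else l.idxOf y - 1 := by
  induction l with
  | nil => simp at hy
  | cons d r ih =>
    have hd : d ∉ r := (List.nodup_cons.1 hl).1
    have hr : r.Nodup := (List.nodup_cons.1 hl).2
    by_cases hxd : x = d
    · subst hxd
      have hyd : y ≠ x := hxy
      rw [List.erase_cons_head]
      rw [List.idxOf_cons_ne _ (Ne.symm hxy), List.idxOf_cons_self]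
      simp
    · rw [List.erase_cons_tail (by simp; exact fun e => hxd e.symm)]
      by_cases hyd : y = d
      · subst hyd
        rw [List.idxOf_cons_self, List.idxOf_cons_self,
          List.idxOf_cons_ne _ (fun e => hxd e.symm)]
        simp
      · have hyr : y ∈ r := by
          rcases List.mem_cons.1 hy with h | h
          · exact absurd h hyd
          · exact h
        rw [List.idxOf_cons_ne _ (fun e => hyd e.symm),
          List.idxOf_cons_ne _ (fun e => hyd e.symm),
          List.idxOf_cons_ne _ (fun e => hxd e.symm)]
        rw [ih hr hyr]
        by_cases hxr : x ∈ r
        · have hne : r.idxOf y ≠ r.idxOf x := fun e => hxy ((List.idxOf_inj hyr).1 e)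
          by_cases hc : r.idxOf y < r.idxOf x
          · simp [hc, Nat.succ_lt_succ hc]
          · have h1 : r.idxOf x < r.idxOf y := by omega
            have h2 : 1 ≤ r.idxOf y := by omega
            simp only [if_neg hc, Nat.succ_eq_add_one]
            rw [if_neg (by omega)]
            omega
        · have h1 : r.idxOf x = r.length := List.idxOf_eq_length hxr
          have h2 : r.idxOf y < r.length := List.idxOf_lt_length_iff.2 hyr
          rw [if_pos (by omega), if_pos (by omega)]

theorem nodup_mid {p s : List γ} {x y : γ} (h : (p ++ x :: y :: s).Nodup) :
    x ∉ p ∧ y ∉ p ∧ x ≠ y ∧ x ∉ s ∧ y ∉ s := by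
  simp [List.nodup_append, List.nodup_cons, List.Disjoint] at h
  refine ⟨fun hx => (h.2.2 x hx).1 rfl, fun hy => ((h.2.2 y hy).2.1) rfl, ?_, ?_, ?_⟩ <;> tauto

theorem idx_swap_ne {p s : List γ} {x y z : γ} (hzx : z ≠ x) (hzy : z ≠ y) :
    (p ++ x :: y :: s).idxOf z = (p ++ y :: x :: s).idxOf z := by
  by_cases hz : z ∈ p
  · rw [List.idxOf_append_of_mem hz, List.idxOf_append_of_mem hz]
  · rw [idx_append_right _ hz, idx_append_right _ hz,
      List.idxOf_cons_ne _ (Ne.symm hzx), List.idxOf_cons_ne _ (Ne.symm hzy),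
      List.idxOf_cons_ne _ (Ne.symm hzy), List.idxOf_cons_ne _ (Ne.symm hzx)]

theorem idx_swap_fst {p s : List γ} {x y : γ} (hx : x ∉ p) :
    (p ++ x :: y :: s).idxOf x = p.length := by
  rw [idx_append_right _ hx, List.idxOf_cons_self]; omega

theorem idx_swap_snd {p s : List γ} {x y : γ} (hy : y ∉ p) (hxy : x ≠ y) :
    (p ++ x :: y :: s).idxOf y = p.length + 1 := by
  rw [idx_append_right _ hy, List.idxOf_cons_ne _ hxy, List.idxOf_cons_self]

theorem idx_erase_order {l : List γ} (hl : l.Nodup) {c w x : γ} (hw : w ∈ l) (hx : x ∈ l)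
    (hwc : w ≠ c) (hxc : x ≠ c) (h : l.idxOf w < l.idxOf x) :
    (l.erase c).idxOf w < (l.erase c).idxOf x := by
  have hwx : w ≠ x := fun e => by rw [e] at h; omega
  rw [idx_erase hl hw hwc, idx_erase hl hx hxc]
  by_cases hcl : c ∈ l
  · have h1 : l.idxOf w ≠ l.idxOf c := fun e => hwc ((List.idxOf_inj hw).1 e)
    have h2 : l.idxOf x ≠ l.idxOf c := fun e => hxc ((List.idxOf_inj hx).1 e)
    by_cases hc1 : l.idxOf w < l.idxOf c <;> by_cases hc2 : l.idxOf x < l.idxOf c <;>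
      simp [hc1, hc2] <;> omega
  · have h1 : l.idxOf c = l.length := List.idxOf_eq_length hcl
    have h2 : l.idxOf w < l.length := List.idxOf_lt_length_iff.2 hw
    have h3 : l.idxOf x < l.length := List.idxOf_lt_length_iff.2 hx
    rw [if_pos (by omega), if_pos (by omega)]; exact h

/-! ### swap distance -/

def Dd : List γ → List γ → ℕ
  | _, [] => 0
  | l, a :: t => l.idxOf a + Dd (l.erase a) t

@[simp] theorem Dd_nil (l : List γ) : Dd l [] = 0 := rfl

theorem Dd_cons (l : List γ) (a : γ) (t : List γ) :
    Dd l (a :: t) = l.idxOf a + Dd (l.erase a) t := rfl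

theorem Dd_refl : ∀ (l : List γ), Dd l l = 0
  | [] => rfl
  | a :: t => by
      rw [Dd_cons, List.idxOf_cons_self, List.erase_cons_head, Dd_refl t]

theorem Dd_step : ∀ (l' : List γ) {p s : List γ} {x y : γ},
    (p ++ x :: y :: s).Nodup →
    Dd (p ++ x :: y :: s) l' ≤ Dd (p ++ y :: x :: s) l' + 1 := by
  intro l'
  induction l' with
  | nil => intro p s x y _; simp
  | cons a t ih =>
    intro p s x y hnd
    obtain ⟨hxp, hyp, hxy, hxs, hys⟩ := nodup_mid hnd
    have hnd' : (p ++ y :: x :: s).Nodup :=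
      ((adjSwap_perm ⟨p, s, x, y, rfl, rfl⟩).nodup_iff).2 hnd
    rw [Dd_cons, Dd_cons]
    by_cases hax : a = x
    · subst hax
      rw [idx_swap_fst hxp, idx_swap_snd hxp (Ne.symm hxy)]
      have e1 : (p ++ a :: y :: s).erase a = p ++ y :: s := by
        rw [List.erase_append_right _ hxp, List.erase_cons_head]
      have e2 : (p ++ y :: a :: s).erase a = p ++ y :: s := by
        rw [List.erase_append_right _ hxp,
          List.erase_cons_tail (by simp; exact Ne.symm hxy), List.erase_cons_head]
      rw [e1, e2]; omega
    · by_cases hay : a = y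
      · subst hay
        rw [idx_swap_snd hyp hxy, idx_swap_fst hyp]
        have e1 : (p ++ x :: a :: s).erase a = p ++ x :: s := by
          rw [List.erase_append_right _ hyp,
            List.erase_cons_tail (by simp; exact hxy), List.erase_cons_head]
        have e2 : (p ++ a :: x :: s).erase a = p ++ x :: s := by
          rw [List.erase_append_right _ hyp, List.erase_cons_head]
        rw [e1, e2]; omega
      · rw [idx_swap_ne hax hay]
        by_cases hap : a ∈ p
        · have e1 : (p ++ x :: y :: s).erase a = p.erase a ++ x :: y :: s :=
            List.erase_append_left _ hap
          have e2 : (p ++ y :: x :: s).erase a = p.erase a ++ y :: x :: s :=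
            List.erase_append_left _ hap
          rw [e1, e2]
          have := ih (p := p.erase a) (s := s) (x := x) (y := y)
            (by rw [← e1]; exact hnd.erase a)
          omega
        · by_cases has : a ∈ s
          · have hmem1 : a ∉ (x :: y :: s) → False := fun h => h (by simp [has])
            have e1 : (p ++ x :: y :: s).erase a = p ++ x :: y :: s.erase a := by
              rw [List.erase_append_right _ hap,
                List.erase_cons_tail (by simp; exact fun e => hax e.symm),
                List.erase_cons_tail (by simp; exact fun e => hay e.symm)]
            have e2 : (p ++ y :: x :: s).erase a = p ++ y :: x :: s.erase a := by
              rw [List.erase_append_right _ hap,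
                List.erase_cons_tail (by simp; exact fun e => hay e.symm),
                List.erase_cons_tail (by simp; exact fun e => hax e.symm)]
            rw [e1, e2]
            have := ih (p := p) (s := s.erase a) (x := x) (y := y)
              (by rw [← e1]; exact hnd.erase a)
            omega
          · have ham : a ∉ p ++ x :: y :: s := by
              simp [hap, hax, hay, has]
            have ham' : a ∉ p ++ y :: x :: s := by
              simp [hap, hax, hay, has]
            rw [List.erase_of_not_mem ham, List.erase_of_not_mem ham']
            have := ih (p := p) (s := s) (x := x) (y := y) hnd
            omega

theorem Dd_le : ∀ {k : ℕ} {l l' : List γ}, SwapSeqL k l l' → l.Nodup → Dd l l' ≤ k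
  | 0, l, l', h, _ => by rw [swapSeqL_zero h, Dd_refl]
  | k + 1, l, l', ⟨m, ha, hs⟩, hnd => by
      obtain ⟨p, s, x, y, rfl, rfl⟩ := ha
      have h1 := Dd_step l' (p := p) (s := s) (x := x) (y := y) hnd
      have h2 := Dd_le hs (((adjSwap_perm ⟨p, s, x, y, rfl, rfl⟩).nodup_iff).2 hnd)
      omega

theorem bubble : ∀ {l : List γ} {a : γ}, a ∈ l → SwapSeqL (l.idxOf a) l (a :: l.erase a)
  | [], a, h => by simp at h
  | c :: r, a, h => by
      by_cases hac : a = c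
      · subst hac
        rw [List.idxOf_cons_self, List.erase_cons_head]
        exact rfl
      · have har : a ∈ r := by
          rcases List.mem_cons.1 h with h' | h'
          · exact absurd h' hac
          · exact h'
        rw [List.idxOf_cons_ne _ (fun e => hac e.symm),
          List.erase_cons_tail (by simp; exact fun e => hac e.symm)]
        have step1 : SwapSeqL (r.idxOf a) (c :: r) (c :: a :: r.erase a) :=
          swapSeqL_cons c (bubble har)
        exact swapSeqL_snoc step1 ⟨[], r.erase a, c, a, rfl, rfl⟩

theorem Dd_reach : ∀ {l' l : List γ}, l'.Perm l → l.Nodup → SwapSeqL (Dd l l') l l'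
  | [], l, h, _ => by
      have : l = [] := h.symm.eq_nil
      subst this; exact rfl
  | a :: t, l, h, hnd => by
      have ha : a ∈ l := h.subset (List.mem_cons_self (a := a) (l := t))
      have ht : t.Perm (l.erase a) := (h.trans (List.perm_cons_erase ha)).cons_inv
      have ih := Dd_reach ht (hnd.erase a)
      rw [Dd_cons]
      exact swapSeqL_trans (bubble ha) (swapSeqL_cons a ih)

theorem Dd_dec : ∀ {p : List γ} {l s : List γ} {x w : γ}, l.Nodup →
    (p ++ x :: w :: s).Perm l → l.idxOf w < l.idxOf x →
    Dd l (p ++ w :: x :: s) + 1 = Dd l (p ++ x :: w :: s)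
  | [], l, s, x, w, hnd, hperm, hlt => by
      have hx : x ∈ l := hperm.subset (by simp)
      have hw : w ∈ l := hperm.subset (by simp)
      have hwx : w ≠ x := fun e => by rw [e] at hlt; omega
      simp only [List.nil_append, Dd_cons]
      rw [idx_erase hnd hw hwx, idx_erase hnd hx (Ne.symm hwx)]
      rw [if_pos hlt, if_neg (by omega)]
      rw [List.erase_comm]
      omega
  | c :: p', l, s, x, w, hnd, hperm, hlt => by
      have hc : c ∈ l := hperm.subset (by simp)
      have hrest : (p' ++ x :: w :: s).Perm (l.erase c) :=
        (hperm.trans (List.perm_cons_erase hc)).cons_inv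
      have hcnotin : c ∉ p' ++ x :: w :: s := (List.nodup_cons.1 ((hperm.nodup_iff).2 hnd)).1
      have hxc : x ≠ c := fun e => hcnotin (e ▸ (by simp))
      have hwc : w ≠ c := fun e => hcnotin (e ▸ (by simp))
      have hx : x ∈ l := hperm.subset (by simp)
      have hw : w ∈ l := hperm.subset (by simp)
      have hlt' : (l.erase c).idxOf w < (l.erase c).idxOf x :=
        idx_erase_order hnd hw hx hwc hxc hlt
      have ih := Dd_dec (p := p') (l := l.erase c) (s := s) (x := x) (w := w)
        (hnd.erase c) hrest hlt'
      simp only [List.cons_append, Dd_cons]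
      omega

/-! ### key lemma -/

def KVal (Fs Ts : γ → Prop) (m : List γ) : Prop :=
  ∀ b, Fs b → ∀ t, Ts t → m.idxOf t < m.idxOf b

def KPres (l : List γ) (Fs Ts : γ → Prop) (m : List γ) : Prop :=
  ∀ x, x ∈ l → ¬Fs x → (∀ t, Ts t → l.idxOf t < l.idxOf x) →
    ∀ t, Ts t → m.idxOf t < m.idxOf x

theorem klNonempty {l : List γ} (hl : l.Nodup) (Fs Ts : γ → Prop)
    (hF : ∀ x, Fs x → x ∈ l) (hT : ∀ x, Ts x → x ∈ l)
    (hdisj : ∀ x, Fs x → Ts x → False) :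
    ∃ k m, SwapSeqL k l m ∧ KVal Fs Ts m := by
  classical
  set pa : γ → Bool := fun x => decide (Ts x) with hpa
  set l1 : List γ := l.filter pa with hl1
  set l2 : List γ := l.filter (fun x => !pa x) with hl2
  set m : List γ := l1 ++ l2 with hm
  have hperm : m.Perm l := List.filter_append_perm pa l
  refine ⟨Dd l m, m, Dd_reach hperm hl, ?_⟩
  intro b hFb t hTt
  have htl1 : t ∈ l1 := by
    rw [hl1]; exact List.mem_filter.2 ⟨hT t hTt, by simp [hpa, hTt]⟩
  have hbl1 : b ∉ l1 := by
    intro hmem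
    have := (List.mem_filter.1 hmem).2
    simp [hpa] at this
    exact hdisj b hFb this
  have h1 : m.idxOf t < l1.length := by
    rw [hm, List.idxOf_append_of_mem htl1]
    exact List.idxOf_lt_length_iff.2 htl1
  have h2 : l1.length ≤ m.idxOf b := by
    rw [hm, idx_append_right _ hbl1]; omega
  omega

theorem klStep {l : List γ} (hl : l.Nodup) (Fs Ts : γ → Prop)
    (hF : ∀ x, Fs x → x ∈ l) (hT : ∀ x, Ts x → x ∈ l)
    {l' : List γ} (hperm : l'.Perm l) (hval : KVal Fs Ts l')
    (hnpres : ¬ KPres l Fs Ts l') :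
    ∃ l'', l''.Perm l ∧ KVal Fs Ts l'' ∧ Dd l l'' + 1 = Dd l l' := by
  classical
  have hndl' : l'.Nodup := hperm.nodup_iff.2 hl
  rw [KPres] at hnpres
  push_neg at hnpres
  obtain ⟨x, hxl, hxF, hxall, t₀, hTt₀, hnlt⟩ := hnpres
  set V : Finset γ := l'.toFinset.filter
    (fun z => ¬Fs z ∧ (∀ t, Ts t → l.idxOf t < l.idxOf z) ∧
      ∃ t, Ts t ∧ l'.idxOf z < l'.idxOf t) with hV
  have hxl' : x ∈ l' := hperm.mem_iff.2 hxl
  have ht₀l' : t₀ ∈ l' := hperm.mem_iff.2 (hT t₀ hTt₀)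
  have hxt₀ : x ≠ t₀ := by
    intro e; have := hxall t₀ hTt₀; rw [e] at this; omega
  have hlt₀ : l'.idxOf x < l'.idxOf t₀ := by
    have hne : l'.idxOf x ≠ l'.idxOf t₀ :=
      fun e => hxt₀ ((List.idxOf_inj hxl').1 e)
    omega
  have hxV : x ∈ V := by
    rw [hV, Finset.mem_filter]
    exact ⟨List.mem_toFinset.2 hxl', hxF, hxall, t₀, hTt₀, hlt₀⟩
  obtain ⟨xM, hxMV, hmax⟩ := V.exists_max_image (fun z => l'.idxOf z) ⟨x, hxV⟩
  rw [hV, Finset.mem_filter] at hxMV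
  obtain ⟨hxMl', hMF, hMall, tS, hTtS, hMlt⟩ := hxMV
  have hxMl'' : xM ∈ l' := List.mem_toFinset.1 hxMl'
  obtain ⟨p, rest, hsplit⟩ := List.mem_iff_append.1 hxMl''
  have hnd' : (p ++ xM :: rest).Nodup := hsplit ▸ hndl'
  have hxMp : xM ∉ p := by
    intro hmem
    exact (List.disjoint_of_nodup_append hnd') hmem (by simp)
  have hidxM : l'.idxOf xM = p.length := by
    rw [hsplit, idx_append_right _ hxMp, List.idxOf_cons_self]; omega
  have htSl' : tS ∈ l' := hperm.mem_iff.2 (hT tS hTtS)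
  have htSlen : l'.idxOf tS < l'.length := List.idxOf_lt_length_iff.2 htSl'
  cases rest with
  | nil =>
    exfalso
    have : l'.length = p.length + 1 := by rw [hsplit]; simp
    omega
  | cons w s =>
    obtain ⟨_, hwp, hxMw, _, hws⟩ := nodup_mid hnd'
    have hwl' : w ∈ l' := hsplit ▸ (by simp)
    have hwl : w ∈ l := hperm.mem_iff.1 hwl'
    have hidw : l'.idxOf w = p.length + 1 := by
      rw [hsplit, idx_swap_snd hwp hxMw]
    have hwFs : ¬ Fs w := by
      intro hFw
      have h1 := hval w hFw tS hTtS
      omega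
    have htSxM : l'.idxOf tS ≠ l'.idxOf xM := by
      intro e
      have h2 : tS = xM := (List.idxOf_inj htSl').1 e
      rw [h2] at hTtS
      exact absurd (hMall xM hTtS) (lt_irrefl _)
    have hwx : l.idxOf w < l.idxOf xM := by
      by_cases hTw : Ts w
      · exact hMall w hTw
      · by_cases hall : ∀ t, Ts t → l.idxOf t < l.idxOf w
        · exfalso
          have htSw : tS ≠ w := fun e => hTw (e ▸ hTtS)
          have hne2 : l'.idxOf tS ≠ l'.idxOf w :=
            fun e => htSw ((List.idxOf_inj htSl').1 e)
          have hwV : w ∈ V := by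
            rw [hV, Finset.mem_filter]
            exact ⟨List.mem_toFinset.2 hwl', hwFs, hall, tS, hTtS, by omega⟩
          have := hmax w hwV
          omega
        · push_neg at hall
          obtain ⟨t', hTt', hge⟩ := hall
          have ht'l : t' ∈ l := hT t' hTt'
          have hwt' : w ≠ t' := fun e => hTw (e ▸ hTt')
          have hne3 : l.idxOf w ≠ l.idxOf t' :=
            fun e => hwt' ((List.idxOf_inj hwl).1 e)
          have := hMall t' hTt'
          omega
    refine ⟨p ++ w :: xM :: s, ?_, ?_, ?_⟩
    · exact (List.Perm.append_left p (List.Perm.swap xM w s)).trans (hsplit ▸ hperm)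
    · intro f hFf t hTt
      have hfxM : f ≠ xM := fun e => hMF (e ▸ hFf)
      have hfw : f ≠ w := fun e => hwFs (e ▸ hFf)
      have hidf : (p ++ w :: xM :: s).idxOf f = l'.idxOf f := by
        rw [hsplit]; exact (idx_swap_ne hfxM hfw).symm
      have htxM : t ≠ xM := by
        intro e
        exact absurd (hMall t hTt) (e ▸ lt_irrefl _)
      by_cases htw : t = w
      · subst htw
        rw [hidf, idx_swap_fst hwp]
        have := hval f hFf t hTt
        omega
      · have hidt : (p ++ w :: xM :: s).idxOf t = l'.idxOf t := by
          rw [hsplit]; exact (idx_swap_ne htxM htw).symm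
        rw [hidf, hidt]
        exact hval f hFf t hTt
    · rw [hsplit]; exact Dd_dec hl (hsplit ▸ hperm) hwx

theorem klFix {l : List γ} (hl : l.Nodup) (Fs Ts : γ → Prop)
    (hF : ∀ x, Fs x → x ∈ l) (hT : ∀ x, Ts x → x ∈ l) :
    ∀ (n : ℕ) (l' : List γ), l'.Perm l → KVal Fs Ts l' → Dd l l' ≤ n →
    ∃ m, m.Perm l ∧ KVal Fs Ts m ∧ KPres l Fs Ts m ∧ Dd l m ≤ Dd l l' := by
  intro n
  induction n with
  | zero =>
    intro l' hperm hval hd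
    by_cases hp : KPres l Fs Ts l'
    · exact ⟨l', hperm, hval, hp, le_refl _⟩
    · obtain ⟨m, _, _, hdec⟩ := klStep hl Fs Ts hF hT hperm hval hp
      omega
  | succ n ih =>
    intro l' hperm hval hd
    by_cases hp : KPres l Fs Ts l'
    · exact ⟨l', hperm, hval, hp, le_refl _⟩
    · obtain ⟨m, hpermm, hvalm, hdec⟩ := klStep hl Fs Ts hF hT hperm hval hp
      obtain ⟨m2, h1, h2, h3, h4⟩ := ih m hpermm hvalm (by omega)
      exact ⟨m2, h1, h2, h3, by omega⟩

theorem keyLemma {l : List γ} (hl : l.Nodup) (Fs Ts : γ → Prop)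
    (hF : ∀ x, Fs x → x ∈ l) (hT : ∀ x, Ts x → x ∈ l)
    (hdisj : ∀ x, Fs x → Ts x → False) :
    ∃ m, SwapSeqL (sInf {k | ∃ m2, SwapSeqL k l m2 ∧ KVal Fs Ts m2}) l m ∧
      KVal Fs Ts m ∧ KPres l Fs Ts m := by
  have hne : {k | ∃ m2, SwapSeqL k l m2 ∧ KVal Fs Ts m2}.Nonempty := by
    obtain ⟨k, m, h1, h2⟩ := klNonempty hl Fs Ts hF hT hdisj
    exact ⟨k, m, h1, h2⟩
  obtain ⟨l₀, hseq₀, hval₀⟩ := Nat.sInf_mem hne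
  have hperm₀ : l₀.Perm l := swapSeqL_perm hseq₀
  have hd₀ : Dd l l₀ ≤ sInf {k | ∃ m2, SwapSeqL k l m2 ∧ KVal Fs Ts m2} := Dd_le hseq₀ hl
  obtain ⟨m, hpermm, hvalm, hpresm, hdle⟩ :=
    klFix hl Fs Ts hF hT (Dd l l₀) l₀ hperm₀ hval₀ (le_refl _)
  have hmem : Dd l m ∈ {k | ∃ m2, SwapSeqL k l m2 ∧ KVal Fs Ts m2} :=
    ⟨m, Dd_reach hpermm hl, hvalm⟩
  have hge := Nat.sInf_le hmem
  have heq : Dd l m = sInf {k | ∃ m2, SwapSeqL k l m2 ∧ KVal Fs Ts m2} := by omega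
  exact ⟨m, heq ▸ Dd_reach hpermm hl, hvalm, hpresm⟩

end MS

namespace MS

variable {α β : Type*}

theorem swapSeq_trans : ∀ {k1 k2 : ℕ} {L M R : Prefs α β},
    SwapSeq k1 L M → SwapSeq k2 M R → SwapSeq (k1 + k2) L R
  | 0, k2, L, M, R, h1, h2 => by
      rw [show M = L from h1] at h2; simpa [Nat.zero_add] using h2
  | k1 + 1, k2, L, M, R, ⟨L'', ha, hs⟩, h2 => by
      have h3 : SwapSeq (k1 + k2) L'' R := swapSeq_trans hs h2
      have e : k1 + 1 + k2 = k1 + k2 + 1 := by omega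
      rw [e]; exact ⟨L'', ha, h3⟩

theorem stepA [DecidableEq α] : ∀ {k : ℕ} (P : Prefs α β) (x : α) (m : List β),
    SwapSeqL k (P.fA x) m → SwapSeq k P ⟨Function.update P.fA x m, P.fB⟩
  | 0, P, x, m, h => by
      have hm : m = P.fA x := h
      subst hm
      show (⟨Function.update P.fA x (P.fA x), P.fB⟩ : Prefs α β) = P
      rw [Function.update_eq_self]
  | k + 1, P, x, m, ⟨m'', ha, hs⟩ => by
      refine ⟨⟨Function.update P.fA x m'', P.fB⟩, Or.inl ⟨x, ?_, ?_, fun b => rfl⟩, ?_⟩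
      · simpa using ha
      · intro a' hne; simp [Function.update_of_ne hne]
      · have h2 := stepA (⟨Function.update P.fA x m'', P.fB⟩ : Prefs α β) x m
          (by simpa using hs)
        simpa [Function.update_idem] using h2

theorem stepB [DecidableEq β] : ∀ {k : ℕ} (P : Prefs α β) (x : β) (m : List α),
    SwapSeqL k (P.fB x) m → SwapSeq k P ⟨P.fA, Function.update P.fB x m⟩
  | 0, P, x, m, h => by
      have hm : m = P.fB x := h
      subst hm
      show (⟨P.fA, Function.update P.fB x (P.fB x)⟩ : Prefs α β) = P
      rw [Function.update_eq_self]
  | k + 1, P, x, m, ⟨m'', ha, hs⟩ => by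
      refine ⟨⟨P.fA, Function.update P.fB x m''⟩, Or.inr ⟨x, ?_, ?_, fun a => rfl⟩, ?_⟩
      · simpa using ha
      · intro b' hne; simp [Function.update_of_ne hne]
      · have h2 := stepB (⟨P.fA, Function.update P.fB x m''⟩ : Prefs α β) x m
          (by simpa using hs)
        simpa [Function.update_idem] using h2

theorem compA [DecidableEq α] (g : α → List β) (n : α → ℕ) (s : Finset α) :
    ∀ (P : Prefs α β), (∀ a ∈ s, SwapSeqL (n a) (P.fA a) (g a)) →
    ∃ P' : Prefs α β, SwapSeq (∑ a ∈ s, n a) P P' ∧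
      (∀ a ∈ s, P'.fA a = g a) ∧ (∀ a ∉ s, P'.fA a = P.fA a) ∧ P'.fB = P.fB := by
  induction s using Finset.induction_on with
  | empty =>
    intro P _
    exact ⟨P, by simp; rfl, by simp, fun a _ => rfl, rfl⟩
  | insert x s hx ih =>
    intro P h
    set P₁ : Prefs α β := ⟨Function.update P.fA x (g x), P.fB⟩ with hP₁
    have hs1 : SwapSeq (n x) P P₁ := stepA P x (g x) (h x (Finset.mem_insert_self x s))
    obtain ⟨P', hseq, h1, h2, h3⟩ := ih P₁ (by
      intro a ha
      have hax : a ≠ x := fun e => hx (e ▸ ha)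
      have : P₁.fA a = P.fA a := by simp [hP₁, Function.update_of_ne hax]
      rw [this]
      exact h a (Finset.mem_insert_of_mem ha))
    refine ⟨P', ?_, ?_, ?_, ?_⟩
    · rw [Finset.sum_insert hx]
      exact swapSeq_trans hs1 hseq
    · intro a ha
      rcases Finset.mem_insert.1 ha with rfl | ha'
      · rw [h2 a hx]; simp [hP₁]
      · exact h1 a ha'
    · intro a ha
      have hax : a ≠ x := fun e => ha (e ▸ Finset.mem_insert_self x s)
      have ha' : a ∉ s := fun e => ha (Finset.mem_insert_of_mem e)
      rw [h2 a ha']; simp [hP₁, Function.update_of_ne hax]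
    · rw [h3]

theorem compB [DecidableEq β] (g : β → List α) (n : β → ℕ) (s : Finset β) :
    ∀ (P : Prefs α β), (∀ b ∈ s, SwapSeqL (n b) (P.fB b) (g b)) →
    ∃ P' : Prefs α β, SwapSeq (∑ b ∈ s, n b) P P' ∧
      (∀ b ∈ s, P'.fB b = g b) ∧ (∀ b ∉ s, P'.fB b = P.fB b) ∧ P'.fA = P.fA := by
  induction s using Finset.induction_on with
  | empty =>
    intro P _
    exact ⟨P, by simp; rfl, by simp, fun b _ => rfl, rfl⟩
  | insert x s hx ih =>
    intro P h
    set P₁ : Prefs α β := ⟨P.fA, Function.update P.fB x (g x)⟩ with hP₁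
    have hs1 : SwapSeq (n x) P P₁ := stepB P x (g x) (h x (Finset.mem_insert_self x s))
    obtain ⟨P', hseq, h1, h2, h3⟩ := ih P₁ (by
      intro b hb
      have hbx : b ≠ x := fun e => hx (e ▸ hb)
      have : P₁.fB b = P.fB b := by simp [hP₁, Function.update_of_ne hbx]
      rw [this]
      exact h b (Finset.mem_insert_of_mem hb))
    refine ⟨P', ?_, ?_, ?_, ?_⟩
    · rw [Finset.sum_insert hx]
      exact swapSeq_trans hs1 hseq
    · intro b hb
      rcases Finset.mem_insert.1 hb with rfl | hb'
      · rw [h2 b hx]; simp [hP₁]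
      · exact h1 b hb'
    · intro b hb
      have hbx : b ≠ x := fun e => hb (e ▸ Finset.mem_insert_self x s)
      have hb' : b ∉ s := fun e => hb (Finset.mem_insert_of_mem e)
      rw [h2 b hb']; simp [hP₁, Function.update_of_ne hbx]
    · rw [h3]

theorem decomp [Fintype α] [Fintype β] [DecidableEq α] [DecidableEq β] :
    ∀ {k : ℕ} {L L' : Prefs α β}, SwapSeq k L L' →
    ∃ (kA : α → ℕ) (kB : β → ℕ), (∑ a, kA a) + (∑ b, kB b) = k ∧
      (∀ a, SwapSeqL (kA a) (L.fA a) (L'.fA a)) ∧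
      (∀ b, SwapSeqL (kB b) (L.fB b) (L'.fB b))
  | 0, L, L', h =>
      ⟨fun _ => 0, fun _ => 0, by simp,
        fun a => show L'.fA a = L.fA a by rw [show L' = L from h],
        fun b => show L'.fB b = L.fB b by rw [show L' = L from h]⟩
  | k + 1, L, L', ⟨L'', hstep, hs⟩ => by
      obtain ⟨kA, kB, hsum, hA, hB⟩ := decomp hs
      rcases hstep with ⟨a₀, hadj, hoth, hBeq⟩ | ⟨b₀, hadj, hoth, hAeq⟩
      · refine ⟨Function.update kA a₀ (kA a₀ + 1), kB, ?_, ?_, ?_⟩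
        · have e1 := Finset.sum_update_of_mem (Finset.mem_univ a₀) kA (kA a₀ + 1)
          have e2 := Finset.sum_update_of_mem (Finset.mem_univ a₀) kA (kA a₀)
          rw [Function.update_eq_self] at e2
          omega
        · intro a
          by_cases ha : a = a₀
          · subst ha
            rw [Function.update_self]
            exact ⟨L''.fA a, hadj, hA a⟩
          · rw [Function.update_of_ne ha]
            have := hA a
            rw [hoth a ha] at this
            exact this
        · intro b
          have := hB b
          rw [hBeq b] at this
          exact this
      · refine ⟨kA, Function.update kB b₀ (kB b₀ + 1), ?_, ?_, ?_⟩
        · have e1 := Finset.sum_update_of_mem (Finset.mem_univ b₀) kB (kB b₀ + 1)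
          have e2 := Finset.sum_update_of_mem (Finset.mem_univ b₀) kB (kB b₀)
          rw [Function.update_eq_self] at e2
          omega
        · intro a
          have := hA a
          rw [hAeq a] at this
          exact this
        · intro b
          by_cases hb : b = b₀
          · subst hb
            rw [Function.update_self]
            exact ⟨L''.fB b, hadj, hB b⟩
          · rw [Function.update_of_ne hb]
            have := hB b
            rw [hoth b hb] at this
            exact this

end MS

/-- with `E_b` the set of blocking edges of `S`, `E_b^A` (resp.
`E_b^B`) those blocking edges whose endpoint in `A` (resp. `B`) has full
capacity: (i) `S` can be made stable by a finite sequence of swaps iff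
`E_b = E_b^A ∪ E_b^B`; and (ii) in that case the minimum length of such a
sequence is `min { h(F) : E_b ∖ E_b^B ⊆ F ⊆ E_b^A }`. -/
theorem capacitated_min_swaps {α β : Type*} [Fintype α] [Fintype β]
    [DecidableEq α] [DecidableEq β]
    (E : Finset (α × β)) (cA : α → ℕ) (cB : β → ℕ)
    (hcA : ∀ a, 0 < cA a) (hcB : ∀ b, 0 < cB b)
    (L : Prefs α β) (hL : ValidPrefs E L)
    (S : Finset (α × β)) (hSE : S ⊆ E)
    (hdA : ∀ a, degA S a ≤ cA a) (hdB : ∀ b, degB S b ≤ cB b) :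
    ((∃ (k : ℕ) (L' : Prefs α β), SwapSeq k L L' ∧ CapStable E cA cB L' S) ↔
        {e : α × β | CapBlocking E cA cB L S e} =
          {e : α × β | CapBlocking E cA cB L S e ∧ degA S e.1 = cA e.1} ∪
            {e : α × β | CapBlocking E cA cB L S e ∧ degB S e.2 = cB e.2}) ∧
    ({e : α × β | CapBlocking E cA cB L S e} =
          {e : α × β | CapBlocking E cA cB L S e ∧ degA S e.1 = cA e.1} ∪
            {e : α × β | CapBlocking E cA cB L S e ∧ degB S e.2 = cB e.2} →
      IsLeast {k : ℕ | ∃ L' : Prefs α β, SwapSeq k L L' ∧ CapStable E cA cB L' S}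
        (sInf {m : ℕ | ∃ F : Set (α × β),
          {e : α × β | CapBlocking E cA cB L S e} \
              {e : α × β | CapBlocking E cA cB L S e ∧ degB S e.2 = cB e.2} ⊆ F ∧
          F ⊆ {e : α × β | CapBlocking E cA cB L S e ∧ degA S e.1 = cA e.1} ∧
          hCost E cA cB L S F = m})) := by
  classical
  obtain ⟨hndA, hndB, hmemA, hmemB⟩ := hL
  set Eb : Set (α × β) := {e : α × β | CapBlocking E cA cB L S e} with hEbdef
  set EbA : Set (α × β) :=
    {e : α × β | CapBlocking E cA cB L S e ∧ degA S e.1 = cA e.1} with hEbAdef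
  set EbB : Set (α × β) :=
    {e : α × β | CapBlocking E cA cB L S e ∧ degB S e.2 = cB e.2} with hEbBdef
  set Mset : Set ℕ := {m : ℕ | ∃ F : Set (α × β), Eb \ EbB ⊆ F ∧ F ⊆ EbA ∧
    hCost E cA cB L S F = m} with hMdef
  -- ### Lower bound machinery
  have keyLower : ∀ (k : ℕ) (L' : Prefs α β), SwapSeq k L L' → CapStable E cA cB L' S →
      (Eb ⊆ EbA ∪ EbB) ∧ ∃ F : Set (α × β), Eb \ EbB ⊆ F ∧ F ⊆ EbA ∧
        hCost E cA cB L S F ≤ k := by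
    intro k L' hseq hst
    obtain ⟨kA, kB, hsum, hA, hB⟩ := MS.decomp hseq
    have hpermA : ∀ a, (L'.fA a).Perm (L.fA a) := fun a => MS.swapSeqL_perm (hA a)
    have hpermB : ∀ b, (L'.fB b).Perm (L.fB b) := fun b => MS.swapSeqL_perm (hB b)
    have hcases : ∀ e : α × β, CapBlocking E cA cB L S e →
        (degA S e.1 = cA e.1 ∧ ∀ b', (e.1, b') ∈ S →
          (L'.fA e.1).idxOf b' < (L'.fA e.1).idxOf e.2) ∨
        (degB S e.2 = cB e.2 ∧ ∀ a', (a', e.2) ∈ S →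
          (L'.fB e.2).idxOf a' < (L'.fB e.2).idxOf e.1) := by
      intro e hblk
      obtain ⟨heE, heS, _, _⟩ := hblk
      have hnb := hst e
      have hmb : e.2 ∈ L'.fA e.1 := (hpermA e.1).mem_iff.2 ((hmemA e.1 e.2).2
        (by simpa using heE))
      have hma : e.1 ∈ L'.fB e.2 := (hpermB e.2).mem_iff.2 ((hmemB e.1 e.2).2
        (by simpa using heE))
      by_cases haside : degA S e.1 < cA e.1 ∨
          ∃ b', (e.1, b') ∈ S ∧ PrefersIn (L'.fA e.1) e.2 b'
      · right
        by_cases hbside : degB S e.2 < cB e.2 ∨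
            ∃ a', (a', e.2) ∈ S ∧ PrefersIn (L'.fB e.2) e.1 a'
        · exact absurd ⟨heE, heS, haside, hbside⟩ hnb
        · push_neg at hbside
          obtain ⟨h1, h2⟩ := hbside
          refine ⟨by have := hdB e.2; omega, ?_⟩
          intro a' ha'S
          have h3 := h2 a' ha'S
          rw [PrefersIn] at h3
          push_neg at h3
          have h4 := h3 hma
          have ha'mem : a' ∈ L'.fB e.2 :=
            (hpermB e.2).mem_iff.2 ((hmemB a' e.2).2 (hSE ha'S))
          have hne : a' ≠ e.1 := by
            intro hq; subst hq; exact heS (by simpa using ha'S)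
          have hne2 : (L'.fB e.2).idxOf a' ≠ (L'.fB e.2).idxOf e.1 :=
            fun hq => hne ((List.idxOf_inj ha'mem).1 hq)
          omega
      · left
        push_neg at haside
        obtain ⟨h1, h2⟩ := haside
        refine ⟨by have := hdA e.1; omega, ?_⟩
        intro b' hb'S
        have h3 := h2 b' hb'S
        rw [PrefersIn] at h3
        push_neg at h3
        have h4 := h3 hmb
        have hb'mem : b' ∈ L'.fA e.1 :=
          (hpermA e.1).mem_iff.2 ((hmemA e.1 b').2 (hSE hb'S))
        have hne : b' ≠ e.2 := by
          intro hq; subst hq; exact heS (by simpa using hb'S)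
        have hne2 : (L'.fA e.1).idxOf b' ≠ (L'.fA e.1).idxOf e.2 :=
          fun hq => hne ((List.idxOf_inj hb'mem).1 hq)
        omega
    constructor
    · intro e he
      rcases hcases e he with ⟨h1, _⟩ | ⟨h1, _⟩
      · exact Or.inl ⟨he, h1⟩
      · exact Or.inr ⟨he, h1⟩
    · refine ⟨{e : α × β | CapBlocking E cA cB L S e ∧ degA S e.1 = cA e.1 ∧
        ∀ b', (e.1, b') ∈ S → (L'.fA e.1).idxOf b' < (L'.fA e.1).idxOf e.2},
        ?_, ?_, ?_⟩
      · rintro e ⟨he, hnB⟩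
        rcases hcases e he with ⟨h1, h2⟩ | ⟨h1, h2⟩
        · exact ⟨he, h1, h2⟩
        · exact absurd ⟨he, h1⟩ hnB
      · rintro e ⟨h1, h2, _⟩
        exact ⟨h1, h2⟩
      · have hf : ∀ a, fCost L S a {e : α × β | CapBlocking E cA cB L S e ∧
            degA S e.1 = cA e.1 ∧ ∀ b', (e.1, b') ∈ S →
            (L'.fA e.1).idxOf b' < (L'.fA e.1).idxOf e.2} ≤ kA a := by
          intro a
          apply Nat.sInf_le
          refine ⟨L'.fA a, hA a, ?_⟩
          rintro b ⟨_, _, h3⟩ b' hb'S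
          exact h3 b' hb'S
        have hg : ∀ b, gCost L S b ({e : α × β | CapBlocking E cA cB L S e} \
            {e : α × β | CapBlocking E cA cB L S e ∧ degA S e.1 = cA e.1 ∧
            ∀ b', (e.1, b') ∈ S →
            (L'.fA e.1).idxOf b' < (L'.fA e.1).idxOf e.2}) ≤ kB b := by
          intro b
          apply Nat.sInf_le
          refine ⟨L'.fB b, hB b, ?_⟩
          rintro a ⟨hblk, hnF⟩ a' ha'S
          rcases hcases (a, b) hblk with ⟨h1, h2⟩ | ⟨h1, h2⟩
          · exact absurd ⟨hblk, h1, h2⟩ hnF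
          · exact h2 a' ha'S
        have hsumle : (∑ a, fCost L S a _) + (∑ b, gCost L S b _) ≤
            (∑ a, kA a) + (∑ b, kB b) :=
          add_le_add (Finset.sum_le_sum (fun a _ => hf a))
            (Finset.sum_le_sum (fun b _ => hg b))
        calc hCost E cA cB L S _ ≤ (∑ a, kA a) + (∑ b, kB b) := hsumle
          _ = k := hsum
  -- ### Upper bound construction
  have keyUpper : Eb = EbA ∪ EbB →
      ∃ L', SwapSeq (sInf Mset) L L' ∧ CapStable E cA cB L' S := by
    intro hEq
    have hMne : Mset.Nonempty := by
      refine ⟨hCost E cA cB L S EbA, EbA, ?_, subset_rfl, rfl⟩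
      rintro e ⟨he, hnB⟩
      rw [hEq] at he
      rcases he with h | h
      · exact h
      · exact absurd h hnB
    obtain ⟨Fstar, hF1, hF2, hFh⟩ := Nat.sInf_mem hMne
    have hkeyA : ∀ a : α, ∃ m, SwapSeqL (fCost L S a Fstar) (L.fA a) m ∧
        MS.KVal (fun y => (a, y) ∈ Fstar) (fun y => (a, y) ∈ S) m ∧
        MS.KPres (L.fA a) (fun y => (a, y) ∈ Fstar) (fun y => (a, y) ∈ S) m := by
      intro a
      exact MS.keyLemma (hndA a) (fun y => (a, y) ∈ Fstar) (fun y => (a, y) ∈ S)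
        (fun y hy => (hmemA a y).2 (hF2 hy).1.1)
        (fun y hy => (hmemA a y).2 (hSE hy))
        (fun y hyF hyS => (hF2 hyF).1.2.1 hyS)
    have hkeyB : ∀ b : β, ∃ m, SwapSeqL (gCost L S b (Eb \ Fstar)) (L.fB b) m ∧
        MS.KVal (fun y => (y, b) ∈ Eb \ Fstar) (fun y => (y, b) ∈ S) m ∧
        MS.KPres (L.fB b) (fun y => (y, b) ∈ Eb \ Fstar) (fun y => (y, b) ∈ S) m := by
      intro b
      exact MS.keyLemma (hndB b) (fun y => (y, b) ∈ Eb \ Fstar) (fun y => (y, b) ∈ S)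
        (fun y hy => (hmemB y b).2 hy.1.1)
        (fun y hy => (hmemB y b).2 (hSE hy))
        (fun y hyF hyS => hyF.1.2.1 hyS)
    choose gA hgA1 hgA2 hgA3 using hkeyA
    choose gB hgB1 hgB2 hgB3 using hkeyB
    obtain ⟨P₁, hseq1, hP1A, hP1A', hP1B⟩ := MS.compA gA (fun a => fCost L S a Fstar)
      Finset.univ L (fun a _ => hgA1 a)
    obtain ⟨P₂, hseq2, hP2B, hP2B', hP2A⟩ := MS.compB gB
      (fun b => gCost L S b (Eb \ Fstar)) Finset.univ P₁
      (fun b _ => by rw [hP1B]; exact hgB1 b)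
    have hseq : SwapSeq ((∑ a, fCost L S a Fstar) +
        ∑ b, gCost L S b (Eb \ Fstar)) L P₂ := MS.swapSeq_trans hseq1 hseq2
    have hfa : ∀ a, P₂.fA a = gA a := fun a => by
      rw [hP2A]; exact hP1A a (Finset.mem_univ a)
    have hfb : ∀ b, P₂.fB b = gB b := fun b => hP2B b (Finset.mem_univ b)
    have hstab : CapStable E cA cB P₂ S := by
      rintro e ⟨heE, heS, haside, hbside⟩
      by_cases hblk : CapBlocking E cA cB L S e
      · by_cases hFe : e ∈ Fstar
        · have hdeg : degA S e.1 = cA e.1 := (hF2 hFe).2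
          rcases haside with h | ⟨b', hb'S, hpref⟩
          · omega
          · have hfe2 : (e.1, e.2) ∈ Fstar := by simpa using hFe
            have h5 := hgA2 e.1 e.2 hfe2 b' hb'S
            rw [hfa e.1] at hpref
            have := hpref.2
            omega
        · have heB : e ∈ EbB := by
            by_contra hnB
            exact hFe (hF1 ⟨hblk, hnB⟩)
          have hdeg : degB S e.2 = cB e.2 := heB.2
          rcases hbside with h | ⟨a', ha'S, hpref⟩
          · omega
          · have hfe2 : (e.1, e.2) ∈ Eb \ Fstar := by
              refine ⟨by simpa [hEbdef] using hblk, ?_⟩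
              intro hq
              exact hFe (by simpa using hq)
            have h5 := hgB2 e.2 e.1 hfe2 a' ha'S
            rw [hfb e.2] at hpref
            have := hpref.2
            omega
      · by_cases hasideL : degA S e.1 < cA e.1 ∨
            ∃ b', (e.1, b') ∈ S ∧ PrefersIn (L.fA e.1) e.2 b'
        · by_cases hbsideL : degB S e.2 < cB e.2 ∨
              ∃ a', (a', e.2) ∈ S ∧ PrefersIn (L.fB e.2) e.1 a'
          · exact hblk ⟨heE, heS, hasideL, hbsideL⟩
          · push_neg at hbsideL
            obtain ⟨h1, h2⟩ := hbsideL
            have hma : e.1 ∈ L.fB e.2 := (hmemB e.1 e.2).2 (by simpa using heE)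
            have hprem : ∀ t, (t, e.2) ∈ S →
                (L.fB e.2).idxOf t < (L.fB e.2).idxOf e.1 := by
              intro t htS
              have h3 := h2 t htS
              rw [PrefersIn] at h3
              push_neg at h3
              have h4 := h3 hma
              have htm : t ∈ L.fB e.2 := (hmemB t e.2).2 (hSE htS)
              have hne : t ≠ e.1 := by
                intro hq; subst hq; exact heS (by simpa using htS)
              have hne2 : (L.fB e.2).idxOf t ≠ (L.fB e.2).idxOf e.1 :=
                fun hq => hne ((List.idxOf_inj htm).1 hq)
              omega
            have hnF : ¬ ((e.1, e.2) ∈ Eb \ Fstar) := by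
              intro hq
              exact hblk (by simpa [hEbdef] using hq.1)
            have hpres := hgB3 e.2 e.1 hma hnF hprem
            rcases hbside with h | ⟨a', ha'S, hpref⟩
            · omega
            · have h5 := hpres a' ha'S
              rw [hfb e.2] at hpref
              have := hpref.2
              omega
        · push_neg at hasideL
          obtain ⟨h1, h2⟩ := hasideL
          have hmb : e.2 ∈ L.fA e.1 := (hmemA e.1 e.2).2 (by simpa using heE)
          have hprem : ∀ t, (e.1, t) ∈ S →
              (L.fA e.1).idxOf t < (L.fA e.1).idxOf e.2 := by
            intro t htS
            have h3 := h2 t htS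
            rw [PrefersIn] at h3
            push_neg at h3
            have h4 := h3 hmb
            have htm : t ∈ L.fA e.1 := (hmemA e.1 t).2 (hSE htS)
            have hne : t ≠ e.2 := by
              intro hq; subst hq; exact heS (by simpa using htS)
            have hne2 : (L.fA e.1).idxOf t ≠ (L.fA e.1).idxOf e.2 :=
              fun hq => hne ((List.idxOf_inj htm).1 hq)
            omega
          have hnF : ¬ ((e.1, e.2) ∈ Fstar) := by
            intro hq
            exact hblk ((hF2 (by simpa using hq)).1)
          have hpres := hgA3 e.1 e.2 hmb hnF hprem
          rcases haside with h | ⟨b', hb'S, hpref⟩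
          · omega
          · have h5 := hpres b' hb'S
            rw [hfa e.1] at hpref
            have := hpref.2
            omega
    refine ⟨P₂, ?_, hstab⟩
    have heqm : (∑ a, fCost L S a Fstar) + (∑ b, gCost L S b (Eb \ Fstar)) = sInf Mset := by
      rw [← hFh]
      rfl
    rwa [heqm] at hseq
  -- ### Assembly
  constructor
  · constructor
    · rintro ⟨k, L', hs, hst⟩
      apply Set.Subset.antisymm ((keyLower k L' hs hst).1)
      rintro e (h | h)
      · exact h.1
      · exact h.1
    · intro hEq
      obtain ⟨L', hs, hst⟩ := keyUpper hEq
      exact ⟨sInf Mset, L', hs, hst⟩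
  · intro hEq
    constructor
    · obtain ⟨L', hs, hst⟩ := keyUpper hEq
      exact ⟨L', hs, hst⟩
    · rintro k ⟨L', hs, hst⟩
      obtain ⟨F, h1, h2, h3⟩ := (keyLower k L' hs hst).2
      exact le_trans (Nat.sInf_le ⟨F, h1, h2, rfl⟩) h3
end

section
/- Let (G, L) be an SMP instance, M a perfect matching of G, and uv a blocking edge of M such that u has degree exactly 2 in G. Let σ be the swap that transposes the two vertices in the preference list ℓ(u). Then with respect to σ(L), the edge uv is not a blocking edge of M, and every edge that is a blocking edge of M with respect to σ(L) was already a blocking edge of M with respect to L. -/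
/-- if `M` is a perfect matching, `(u, v)` is a blocking edge of
`M`, `u` has degree exactly 2 and `σ` is the swap transposing the two vertices
of `ℓ(u)` (so `L'` = `σ(L)`), then `(u, v)` is not a blocking edge of `M`
w.r.t. `L'`, and every blocking edge of `M` w.r.t. `L'` was already a blocking
edge of `M` w.r.t. `L`. -/
theorem swap_at_degree_two_vertex_fixes_blocking_edge {α β : Type*}
    [DecidableEq α] [DecidableEq β]
    (E : Finset (α × β)) (L L' : Prefs α β) (M : Finset (α × β)) (u : α) (v : β)
    (hL : ValidPrefs E L) (hM : IsMatching E M)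
    (hperfA : ∀ a, ∃ b, (a, b) ∈ M) (hperfB : ∀ b, ∃ a, (a, b) ∈ M)
    (hblock : Blocking E L M (u, v))
    (hdeg : (E.filter (fun e => e.1 = u)).card = 2)
    (hσ : ∃ x y : β, L.fA u = [x, y] ∧ L'.fA u = [y, x])
    (hσA : ∀ a, a ≠ u → L'.fA a = L.fA a)
    (hσB : ∀ b, L'.fB b = L.fB b) :
    ¬ Blocking E L' M (u, v) ∧
      ∀ e : α × β, Blocking E L' M e → Blocking E L M e := by
  obtain ⟨x, y, hLu, hLu'⟩ := hσ
  have hnd := hL.1 u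
  rw [hLu] at hnd
  have hxy : x ≠ y := by simpa using hnd
  have hmemA : ∀ b, (u, b) ∈ E ↔ (b = x ∨ b = y) := by
    intro b
    rw [← hL.2.2.1 u b, hLu]
    simp
  obtain ⟨hE0, hM0, hA0, hB0⟩ := hblock
  obtain ⟨b, hbM, hpref⟩ : ∃ b, (u, b) ∈ M ∧ PrefersIn (L.fA u) v b := by
    rcases hA0 with h | h
    · obtain ⟨b0, hb0⟩ := hperfA u
      exact absurd hb0 (h b0)
    · exact h
  rw [hLu] at hpref
  obtain ⟨hvmem, hvlt⟩ := hpref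
  have hb : b = y := by
    rcases (hmemA b).1 (hM.1 hbM) with h | h
    · exfalso
      rw [h] at hvlt
      simp [List.idxOf_cons] at hvlt
    · exact h
  have hyM : (u, y) ∈ M := hb ▸ hbM
  have hv : v = x := by
    rcases List.mem_cons.mp hvmem with h | h
    · exact h
    · exfalso
      have : v = y := by simpa using h
      rw [this, hb] at hvlt
      omega
  have huniq : ∀ b', (u, b') ∈ M → b' = y := by
    intro b' hb'
    have := hM.2 (u, b') hb' (u, y) hyM (Or.inl rfl)
    simpa using this
  have hnotblock : ∀ w : β, ¬ Blocking E L' M (u, w) := by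
    intro w hw
    obtain ⟨hwE, hwM, hwA, hwB⟩ := hw
    have hwx : w = x := by
      rcases (hmemA w).1 hwE with h | h
      · exact h
      · exact absurd hyM (by rw [← h]; exact hwM)
    rcases hwA with h | h
    · exact h y hyM
    · obtain ⟨b', hb'M, hp⟩ := h
      have hby := huniq b' hb'M
      subst hby
      obtain ⟨_, hlt⟩ := hp
      rw [show ((u, w) : α × β).1 = u from rfl, hLu', show ((u, w) : α × β).2 = w from rfl, hwx] at hlt
      simp [List.idxOf_cons, hxy, hxy.symm] at hlt
  refine ⟨hv ▸ hnotblock x, ?_⟩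
  rintro ⟨a, w⟩ ⟨heE, heM, hA', hB'⟩
  by_cases hau : a = u
  · subst hau
    exact absurd ⟨heE, heM, hA', hB'⟩ (hnotblock w)
  · refine ⟨heE, heM, ?_, ?_⟩
    · rw [hσA a hau] at hA'
      exact hA'
    · rw [hσB w] at hB'
      exact hB'
end

section
/- Let (G, L) be an SMP instance and M a perfect matching of G having at most k blocking edges, each of which is incident to a vertex of degree 2 in G. Then there is a sequence of at most k swaps transforming L into preference lists with respect to which M is a perfect stable matching. -/
lemma list_eq_pair {γ : Type*} [DecidableEq γ] (l : List γ) (hnd : l.Nodup)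
    (b b₀ : γ) (hne : b ≠ b₀) (hmem : ∀ x, x ∈ l ↔ x = b ∨ x = b₀)
    (hlt : l.idxOf b < l.idxOf b₀) : l = [b, b₀] := by
  have hperm : l.Perm [b, b₀] := by
    rw [List.perm_ext_iff_of_nodup hnd (by simp [hne])]
    intro x; simp [hmem x]
  have hlen : l.length = 2 := by simpa using hperm.length_eq
  obtain ⟨x, y, rfl⟩ := List.length_eq_two.mp hlen
  have hx : x = b ∨ x = b₀ := (hmem x).mp (by simp)
  have hy : y = b ∨ y = b₀ := (hmem y).mp (by simp)
  have hxy : x ≠ y := by simpa using hnd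
  rcases hx with rfl | rfl
  · rcases hy with rfl | rfl
    · exact absurd rfl hxy
    · rfl
  · rcases hy with rfl | rfl
    · exfalso
      simp [List.idxOf_cons, hne, hne.symm] at hlt
    · exact absurd rfl hxy

lemma key_step {α β : Type*} [DecidableEq α] [DecidableEq β]
    (E : Finset (α × β)) (L : Prefs α β) (M : Finset (α × β))
    (hL : ValidPrefs E L) (hM : IsMatching E M)
    (hperfA : ∀ a, ∃ b, (a, b) ∈ M) (hperfB : ∀ b, ∃ a, (a, b) ∈ M)
    (e : α × β) (he : Blocking E L M e)
    (hdeg : (E.filter (fun e' => e'.1 = e.1)).card = 2 ∨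
        (E.filter (fun e' => e'.2 = e.2)).card = 2) :
    ∃ L', SwapStep L L' ∧ ValidPrefs E L' ∧
      ∀ e', Blocking E L' M e' → Blocking E L M e' ∧ e' ≠ e := by
  obtain ⟨a, b⟩ := e
  obtain ⟨heE, heM, hba, hbb⟩ := he
  rcases hdeg with hdeg | hdeg
  · -- a has degree 2
    obtain ⟨b₀, hb₀⟩ := hperfA a
    have hbne : b ≠ b₀ := fun h => heM (h ▸ hb₀)
    have prefab : PrefersIn (L.fA a) b b₀ := by
      rcases hba with h | ⟨b', hb', hp⟩
      · exact absurd hb₀ (h b₀)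
      · have hb'b₀ : b' = b₀ :=
          congrArg Prod.snd (hM.2 _ hb' _ hb₀ (Or.inl rfl))
        rwa [hb'b₀] at hp
    have hb₀E : (a, b₀) ∈ E := hM.1 hb₀
    have hmemE : ∀ b', (a, b') ∈ E ↔ b' = b ∨ b' = b₀ := by
      have hsub : ({(a, b), (a, b₀)} : Finset (α × β)) ⊆
          E.filter (fun e' => e'.1 = a) := by
        intro x hx
        simp only [Finset.mem_insert, Finset.mem_singleton] at hx
        rcases hx with rfl | rfl <;> simp [Finset.mem_filter, heE, hb₀E]
      have hcard2 : ({(a, b), (a, b₀)} : Finset (α × β)).card = 2 := by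
        rw [Finset.card_insert_of_notMem (by simp [hbne]), Finset.card_singleton]
      have heq : ({(a, b), (a, b₀)} : Finset (α × β)) =
          E.filter (fun e' => e'.1 = a) :=
        Finset.eq_of_subset_of_card_le hsub (by rw [hdeg, hcard2])
      intro b'
      constructor
      · intro h
        have : (a, b') ∈ E.filter (fun e' => e'.1 = a) := by
          simp [Finset.mem_filter, h]
        rw [← heq] at this
        simpa [Prod.ext_iff] using this
      · rintro (rfl | rfl) <;> assumption
    have hlist : L.fA a = [b, b₀] :=
      list_eq_pair _ (hL.1 a) b b₀ hbne
        (fun x => (hL.2.2.1 a x).trans (hmemE x)) prefab.2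
    refine ⟨⟨fun a' => if a' = a then [b₀, b] else L.fA a', L.fB⟩, ?_, ?_, ?_⟩
    · exact Or.inl ⟨a, ⟨[], [], b, b₀, by simp [hlist], by simp⟩,
        fun a' h => if_neg h, fun _ => rfl⟩
    · refine ⟨fun a' => ?_, hL.2.1, fun a' x => ?_, hL.2.2.2⟩
      · by_cases h : a' = a <;> simp [h, hbne.symm, hL.1 a']
      · by_cases h : a' = a
        · subst h
          simp only [if_pos rfl]
          rw [hmemE x]
          simp [or_comm]
        · simp [h, hL.2.2.1 a' x]
    · rintro ⟨a', b'⟩ ⟨h1, h2, h3, h4⟩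
      by_cases h : a' = a
      · exfalso
        subst h
        rcases (hmemE b').mp h1 with rfl | rfl
        · rcases h3 with h3 | ⟨b'', hb'', hp⟩
          · exact h3 b₀ hb₀
          · have : b'' = b₀ := congrArg Prod.snd (hM.2 _ hb'' _ hb₀ (Or.inl rfl))
            subst this
            have := hp.2
            simp only [if_pos rfl] at this
            simp [List.idxOf_cons, hbne, hbne.symm] at this
        · exact h2 hb₀
      · refine ⟨⟨h1, h2, ?_, h4⟩, ?_⟩
        · simpa only [if_neg h] using h3
        · intro hh
          exact h (congrArg Prod.fst hh)
  · -- b has degree 2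
    obtain ⟨a₀, ha₀⟩ := hperfB b
    have hane : a ≠ a₀ := fun h => heM (h ▸ ha₀)
    have prefab : PrefersIn (L.fB b) a a₀ := by
      rcases hbb with h | ⟨a', ha', hp⟩
      · exact absurd ha₀ (h a₀)
      · have ha'a₀ : a' = a₀ :=
          congrArg Prod.fst (hM.2 _ ha' _ ha₀ (Or.inr rfl))
        rwa [ha'a₀] at hp
    have ha₀E : (a₀, b) ∈ E := hM.1 ha₀
    have hmemE : ∀ a', (a', b) ∈ E ↔ a' = a ∨ a' = a₀ := by
      have hsub : ({(a, b), (a₀, b)} : Finset (α × β)) ⊆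
          E.filter (fun e' => e'.2 = b) := by
        intro x hx
        simp only [Finset.mem_insert, Finset.mem_singleton] at hx
        rcases hx with rfl | rfl <;> simp [Finset.mem_filter, heE, ha₀E]
      have hcard2 : ({(a, b), (a₀, b)} : Finset (α × β)).card = 2 := by
        rw [Finset.card_insert_of_notMem (by simp [hane]), Finset.card_singleton]
      have heq : ({(a, b), (a₀, b)} : Finset (α × β)) =
          E.filter (fun e' => e'.2 = b) :=
        Finset.eq_of_subset_of_card_le hsub (by rw [hdeg, hcard2])
      intro a'
      constructor
      · intro h
        have : (a', b) ∈ E.filter (fun e' => e'.2 = b) := by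
          simp [Finset.mem_filter, h]
        rw [← heq] at this
        simpa [Prod.ext_iff] using this
      · rintro (rfl | rfl) <;> assumption
    have hlist : L.fB b = [a, a₀] :=
      list_eq_pair _ (hL.2.1 b) a a₀ hane
        (fun x => (hL.2.2.2 x b).trans (hmemE x)) prefab.2
    refine ⟨⟨L.fA, fun b' => if b' = b then [a₀, a] else L.fB b'⟩, ?_, ?_, ?_⟩
    · exact Or.inr ⟨b, ⟨[], [], a, a₀, by simp [hlist], by simp⟩,
        fun b' h => if_neg h, fun _ => rfl⟩
    · refine ⟨hL.1, fun b' => ?_, hL.2.2.1, fun x b' => ?_⟩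
      · by_cases h : b' = b <;> simp [h, hane.symm, hL.2.1 b']
      · by_cases h : b' = b
        · subst h
          simp only [if_pos rfl]
          rw [hmemE x]
          simp [or_comm]
        · simp [h, hL.2.2.2 x b']
    · rintro ⟨a', b'⟩ ⟨h1, h2, h3, h4⟩
      by_cases h : b' = b
      · exfalso
        subst h
        rcases (hmemE a').mp h1 with rfl | rfl
        · rcases h4 with h4 | ⟨a'', ha'', hp⟩
          · exact h4 a₀ ha₀
          · have : a'' = a₀ := congrArg Prod.fst (hM.2 _ ha'' _ ha₀ (Or.inr rfl))
            subst this
            have := hp.2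
            simp only [if_pos rfl] at this
            simp [List.idxOf_cons, hane, hane.symm] at this
        · exact h2 ha₀
      · refine ⟨⟨h1, h2, h3, ?_⟩, ?_⟩
        · simpa only [if_neg h] using h4
        · intro hh
          exact h (congrArg Prod.snd hh)

/-- if `M` is a perfect matching with at most `k` blocking edges,
each of which is incident to a vertex of degree exactly 2, then some sequence
of at most `k` swaps turns `L` into lists w.r.t. which `M` is a (perfect)
stable matching. -/
theorem perfect_matching_stabilized_by_k_swaps {α β : Type*}
    [DecidableEq α] [DecidableEq β]
    (E : Finset (α × β)) (L : Prefs α β) (M : Finset (α × β)) (k : ℕ)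
    (hL : ValidPrefs E L) (hM : IsMatching E M)
    (hperfA : ∀ a, ∃ b, (a, b) ∈ M) (hperfB : ∀ b, ∃ a, (a, b) ∈ M)
    (hcount : {e : α × β | Blocking E L M e}.ncard ≤ k)
    (hdeg : ∀ e : α × β, Blocking E L M e →
      (E.filter (fun e' => e'.1 = e.1)).card = 2 ∨
        (E.filter (fun e' => e'.2 = e.2)).card = 2) :
    ∃ k' ≤ k, ∃ L' : Prefs α β, SwapSeq k' L L' ∧ StableM E L' M := by
  induction k generalizing L with
  | zero =>
    have hfin : {e : α × β | Blocking E L M e}.Finite :=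
      Set.Finite.subset E.finite_toSet (fun e he => he.1)
    have hempty : {e : α × β | Blocking E L M e} = ∅ :=
      (Set.ncard_eq_zero hfin).mp (Nat.le_zero.mp hcount)
    refine ⟨0, le_rfl, L, rfl, fun e he => ?_⟩
    exact absurd he (by simpa using Set.eq_empty_iff_forall_notMem.mp hempty e)
  | succ k ih =>
    by_cases hstab : StableM E L M
    · exact ⟨0, Nat.zero_le _, L, rfl, hstab⟩
    · unfold StableM at hstab
      obtain ⟨e, he⟩ := not_forall.mp hstab
      rw [not_not] at he
      obtain ⟨L'', hstep, hvalid, hsub⟩ :=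
        key_step E L M hL hM hperfA hperfB e he (hdeg e he)
      have hfin : {e : α × β | Blocking E L M e}.Finite :=
        Set.Finite.subset E.finite_toSet (fun e' he' => he'.1)
      have hss : {e' : α × β | Blocking E L'' M e'} ⊂ {e' : α × β | Blocking E L M e'} := by
        constructor
        · exact fun e' he' => (hsub e' he').1
        · intro hcon
          exact (hsub e (hcon he)).2 rfl
      have hlt : {e' : α × β | Blocking E L'' M e'}.ncard <
          {e' : α × β | Blocking E L M e'}.ncard := Set.ncard_lt_ncard hss hfin
      have hcount'' : {e' : α × β | Blocking E L'' M e'}.ncard ≤ k := by omega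
      have hdeg'' : ∀ e' : α × β, Blocking E L'' M e' →
          (E.filter (fun x => x.1 = e'.1)).card = 2 ∨
            (E.filter (fun x => x.2 = e'.2)).card = 2 :=
        fun e' he' => hdeg e' (hsub e' he').1
      obtain ⟨k', hk', L', hseq, hstable⟩ := ih L'' hvalid hcount'' hdeg''
      exact ⟨k' + 1, Nat.succ_le_succ hk', L', ⟨L'', hstep, hseq⟩, hstable⟩
end
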